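/- arXiv:1905.04068 — 7 statements merged into one kernel-verified Lean document; each statement's English description precedes it below -/
import Mathlib

section
/- Let (X_n)_{n≥1} be a sequence of integrable real-valued random variables on a probability space that are identically distributed with common mean E[X], and suppose there exists an integer m ≥ 1 such that for every i with 1 ≤ i ≤ m the subsequence (X_{i+jm})_{j≥0} is a family of mutually independent random variables. Then (1/N) ∑_{n=1}^{N} X_n converges to E[X] almost surely as N → ∞. -/
open MeasureTheory ProbabilityTheory Filter Topology

/-- Number of terms of the progression `i, i+m, i+2m, …` lying in `[1, N]` (for `1 ≤ i`). -/
def sC (m i N : ℕ) : ℕ := if i ≤ N then (N - i) / m + 1 else 0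

lemma sC_mem_iff {m i N j : ℕ} (hm : 1 ≤ m) (hi : 1 ≤ i) :
    j < sC m i N ↔ i + j * m ≤ N := by
  unfold sC
  by_cases hiN : i ≤ N
  · rw [if_pos hiN, Nat.lt_succ_iff, Nat.le_div_iff_mul_le hm]
    omega
  · rw [if_neg hiN]
    constructor
    · omega
    · intro h; omega

lemma sum_decomp (m : ℕ) (hm : 1 ≤ m) (g : ℕ → ℝ) (N : ℕ) :
    ∑ n ∈ Finset.Icc 1 N, g n
      = ∑ i ∈ Finset.Icc 1 m, ∑ j ∈ Finset.range (sC m i N), g (i + j * m) := by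
  rw [Finset.sum_sigma']
  refine (Finset.sum_nbij' (i := fun p : Σ _ : ℕ, ℕ => p.1 + p.2 * m)
    (j := fun n => ⟨(n - 1) % m + 1, (n - 1) / m⟩) ?_ ?_ ?_ ?_ ?_).symm
  · rintro ⟨i, j⟩ hp
    simp only [Finset.mem_sigma, Finset.mem_Icc, Finset.mem_range] at hp
    obtain ⟨⟨hi1, _⟩, hj⟩ := hp
    have := (sC_mem_iff hm hi1).1 hj
    simp only [Finset.mem_Icc]
    omega
  · intro n hn
    simp only [Finset.mem_Icc] at hn
    have hmod : (n - 1) % m < m := Nat.mod_lt _ hm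
    have hkey : (n - 1) % m + (n - 1) / m * m = n - 1 := Nat.mod_add_div' (n - 1) m
    simp only [Finset.mem_sigma, Finset.mem_Icc, Finset.mem_range]
    refine ⟨⟨by omega, by omega⟩, ?_⟩
    rw [sC_mem_iff hm (by omega)]
    omega
  · rintro ⟨i, j⟩ hp
    simp only [Finset.mem_sigma, Finset.mem_Icc, Finset.mem_range] at hp
    obtain ⟨⟨hi1, him⟩, _⟩ := hp
    have h1 : i + j * m - 1 = (i - 1) + j * m := by omega
    have hmod : ((i - 1) + j * m) % m = i - 1 := by
      rw [Nat.add_mul_mod_self_right]; exact Nat.mod_eq_of_lt (by omega)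
    have hdiv : ((i - 1) + j * m) / m = j := by
      rw [Nat.add_mul_div_right _ _ hm, Nat.div_eq_of_lt (by omega), Nat.zero_add]
    have e1 : (i + j * m - 1) % m + 1 = i := by rw [h1, hmod]; omega
    have e2 : (i + j * m - 1) / m = j := by rw [h1, hdiv]
    simp only [e1, e2]
  · intro n hn
    simp only [Finset.mem_Icc] at hn
    have hkey : (n - 1) % m + (n - 1) / m * m = n - 1 := Nat.mod_add_div' (n - 1) m
    simp only []
    omega
  · intro _ _; rfl

lemma sC_tendsto_atTop {m i : ℕ} (hm : 1 ≤ m) :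
    Tendsto (fun N => sC m i N) atTop atTop := by
  rw [tendsto_atTop_atTop]
  intro b
  refine ⟨i + b * m, fun N hN => ?_⟩
  have hiN : i ≤ N := by omega
  unfold sC
  rw [if_pos hiN]
  have : b ≤ (N - i) / m := (Nat.le_div_iff_mul_le hm).2 (by omega)
  omega

lemma sC_bound {m i N : ℕ} (hm : 1 ≤ m) (hi1 : 1 ≤ i) (him : i ≤ m) (hiN : i ≤ N) :
    N + 1 ≤ m * sC m i N + i ∧ m * sC m i N ≤ N + m := by
  unfold sC
  rw [if_pos hiN]
  have h1 := Nat.div_add_mod (N - i) m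
  have h2 : (N - i) % m < m := Nat.mod_lt _ hm
  have hA : ∀ a r : ℕ, a + r = N - i → r < m →
      N + 1 ≤ (a + m) + i ∧ a + m ≤ N + m := by intro a r h1 h2; omega
  have h1 := Nat.div_add_mod (N - i) m
  have h2 := Nat.mod_lt (N - i) hm
  have h3 : m * ((N - i) / m + 1) = m * ((N - i) / m) + m := by ring
  rw [h3]
  exact hA _ _ h1 h2

lemma sC_div_tendsto {m i : ℕ} (hm : 1 ≤ m) (hi1 : 1 ≤ i) (him : i ≤ m) :
    Tendsto (fun N : ℕ => (sC m i N : ℝ) / N) atTop (𝓝 (1 / m)) := by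
  have hm0 : (0:ℝ) < m := by exact_mod_cast hm
  have hdiff : Tendsto (fun N : ℕ => (sC m i N : ℝ) / N - 1 / m) atTop (𝓝 0) := by
    apply squeeze_zero_norm' (a := fun N : ℕ => 1 / (N : ℝ))
    · filter_upwards [eventually_ge_atTop i, eventually_ge_atTop 1] with N hiN hN1
      have hN0 : (0:ℝ) < N := by exact_mod_cast hN1
      obtain ⟨hb1, hb2⟩ := sC_bound hm hi1 him hiN
      have hb1' : (N:ℝ) + 1 ≤ m * sC m i N + i := by exact_mod_cast hb1
      have hb2' : (m:ℝ) * sC m i N ≤ N + m := by exact_mod_cast hb2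
      have hi' : (i:ℝ) ≤ m := by exact_mod_cast him
      rw [Real.norm_eq_abs, div_sub_div _ _ (ne_of_gt hN0) (ne_of_gt hm0), abs_div,
        abs_of_pos (by positivity : (0:ℝ) < ↑N * ↑m),
        div_le_div_iff₀ (by positivity) hN0]
      have habs : |(sC m i N : ℝ) * m - N * 1| ≤ m := by
        rw [abs_le]
        constructor <;> nlinarith
      nlinarith [habs, hN0]
    · exact tendsto_one_div_atTop_nhds_zero_nat
  have := hdiff.add (tendsto_const_nhds (x := (1:ℝ)/m))
  simpa using this

/-- Lemma 2: strong law of large numbers for structurally i.i.d. (s.i.i.d.) sequences.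
If `(X_n)_{n ≥ 1}` are identically distributed integrable random variables and there exists
`m ≥ 1` such that along every arithmetic progression with common difference `m` the variables
are mutually independent, then `(1/N) ∑_{n=1}^N X_n → E[X_1]` almost surely. -/
theorem stmt1 {Ω : Type*} [MeasurableSpace Ω] (μ : Measure Ω) [IsProbabilityMeasure μ]
    (X : ℕ → Ω → ℝ)
    (hint : ∀ n, 1 ≤ n → Integrable (X n) μ)
    (hident : ∀ n, 1 ≤ n → IdentDistrib (X n) (X 1) μ μ)
    (hindep : ∃ m : ℕ, 1 ≤ m ∧ ∀ i, 1 ≤ i → i ≤ m →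
      iIndepFun
        (fun j : ℕ => X (i + j * m)) μ) :
    ∀ᵐ ω ∂μ, Tendsto (fun N : ℕ => (1 / (N : ℝ)) * ∑ n ∈ Finset.Icc 1 N, X n ω)
      atTop (nhds (∫ ω, X 1 ω ∂μ)) := by
  obtain ⟨m, hm, hiid⟩ := hindep
  set E := ∫ ω, X 1 ω ∂μ with hE
  have key : ∀ i ∈ Finset.Icc 1 m, ∀ᵐ ω ∂μ,
      Tendsto (fun n : ℕ => (∑ j ∈ Finset.range n, X (i + j * m) ω) / n) atTop
        (𝓝 E) := by
    intro i hi
    obtain ⟨hi1, him⟩ := Finset.mem_Icc.1 hi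
    have hpos : ∀ j : ℕ, 1 ≤ i + j * m := fun j => le_trans hi1 (Nat.le_add_right _ _)
    have h := strong_law_ae_real (μ := μ) (fun j => X (i + j * m))
      (by simpa using hint i hi1)
      (fun j k hjk => (hiid i hi1 him).indepFun hjk)
      (fun j => (hident _ (hpos j)).trans
        ((hident _ (hpos 0)).symm))
    simp only [Nat.zero_mul, Nat.add_zero] at h
    rw [(hident i hi1).integral_eq] at h
    rwa [← hE] at h
  have key' := (Filter.eventually_all_finset (Finset.Icc 1 m)).2 key
  filter_upwards [key'] with ω hω
  have hm0 : (m : ℝ) ≠ 0 := by positivity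
  have hper : ∀ i ∈ Finset.Icc 1 m,
      Tendsto (fun N : ℕ => (∑ j ∈ Finset.range (sC m i N), X (i + j * m) ω) / N)
        atTop (𝓝 (E * (1 / m))) := by
    intro i hi
    obtain ⟨hi1, him⟩ := Finset.mem_Icc.1 hi
    have h1 : Tendsto (fun N => sC m i N) atTop atTop := sC_tendsto_atTop hm
    have h2 := (hω i hi).comp h1
    have h3 := sC_div_tendsto hm hi1 him
    have h4 := h2.mul h3
    refine h4.congr' ?_
    filter_upwards [eventually_ge_atTop i] with N hiN
    have hC0 : sC m i N ≠ 0 := by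
      unfold sC; rw [if_pos hiN]; exact Nat.succ_ne_zero _
    have hC0' : (sC m i N : ℝ) ≠ 0 := Nat.cast_ne_zero.2 hC0
    simp only [Function.comp]
    rw [div_mul_div_comm, mul_comm (∑ j ∈ Finset.range (sC m i N), X (i + j * m) ω),
      mul_div_mul_left _ _ hC0']
  have hsum := tendsto_finset_sum (Finset.Icc 1 m) hper
  have hval : ∑ _i ∈ Finset.Icc 1 m, E * (1 / (m:ℝ)) = E := by
    rw [Finset.sum_const, Nat.card_Icc]
    simp only [Nat.add_sub_cancel, nsmul_eq_mul]
    field_simp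
  rw [hval] at hsum
  refine hsum.congr fun N => ?_
  rw [sum_decomp m hm (fun n => X n ω) N, Finset.mul_sum]
  refine Finset.sum_congr rfl fun i _ => ?_
  rw [one_div, inv_mul_eq_div]
end

section
/- Let (S_k)_{k≥1} be strictly positive random variables and (g_k)_{k≥1} nonnegative integrable random variables on a common probability space. Assume each sequence is s.i.i.d.: the S_k are identically distributed with 0 < E[S_1] < ∞ and there is an integer m ≥ 1 such that along every arithmetic progression with common difference m the S_k are mutually independent; similarly the g_k are identically distributed and there is an integer m' ≥ 1 such that along every arithmetic progression with common difference m' the g_k are mutually independent. Define T_D(k) = S_1 + ⋯ + S_k and, for T > 0, M(T) = #{k ≥ 1 : T_D(k) ≤ T}. Then almost surely lim_{T→∞} (1/T) ∑_{k=1}^{M(T)} g_k = E[g_1] / E[S_1]. -/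
open MeasureTheory ProbabilityTheory Filter Topology

set_option maxHeartbeats 1000000

/-- Reindexing a sum over `Icc 1 n` by residue classes mod `m` (residues in `[1, m]`). -/
lemma sum_Icc_eq_sum_residues (f : ℕ → ℝ) (m n : ℕ) (hm : 1 ≤ m) :
    ∑ k ∈ Finset.Icc 1 n, f k =
      ∑ i ∈ Finset.Icc 1 m, ∑ j ∈ Finset.range ((n + m - i) / m), f (i + j * m) := by
  rw [Finset.sum_sigma']
  have key : ∀ i j : ℕ, 1 ≤ i → i ≤ m → (j < (n + m - i) / m ↔ i + j * m ≤ n) := by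
    intro i j h1 h2
    rw [Nat.lt_iff_add_one_le, Nat.le_div_iff_mul_le (by omega : 0 < m), add_mul, one_mul]
    revert h1 h2
    generalize j * m = p
    omega
  refine (Finset.sum_nbij' (fun p : Σ _ : ℕ, ℕ => p.1 + p.2 * m)
    (fun k => ⟨(k - 1) % m + 1, (k - 1) / m⟩) ?_ ?_ ?_ ?_ ?_).symm
  · rintro ⟨i, j⟩ hp
    simp only [Finset.mem_sigma, Finset.mem_Icc, Finset.mem_range] at hp ⊢
    obtain ⟨⟨h1, h2⟩, h3⟩ := hp
    have := (key i j h1 h2).1 h3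
    omega
  · intro k hk
    simp only [Finset.mem_Icc] at hk
    simp only [Finset.mem_sigma, Finset.mem_Icc, Finset.mem_range]
    have hmod : (k - 1) % m < m := Nat.mod_lt _ (by omega)
    refine ⟨⟨by omega, by omega⟩, ?_⟩
    rw [key _ _ (by omega) (by omega)]
    have : (k - 1) % m + (k - 1) / m * m = k - 1 := Nat.mod_add_div' _ _
    omega
  · rintro ⟨i, j⟩ hp
    simp only [Finset.mem_sigma, Finset.mem_Icc, Finset.mem_range] at hp
    obtain ⟨⟨h1, h2⟩, _⟩ := hp
    have he : i + j * m - 1 = (i - 1) + j * m := by omega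
    have hmod : ((i - 1) + j * m) % m = i - 1 := by
      rw [Nat.add_mul_mod_self_right, Nat.mod_eq_of_lt (by omega)]
    have hdiv : ((i - 1) + j * m) / m = j := by
      rw [Nat.add_mul_div_right _ _ (by omega : 0 < m), Nat.div_eq_of_lt (by omega)]
      omega
    ext
    · simp only [he, hmod]; omega
    · simp only [he, hdiv]
      exact HEq.rfl
  · intro k hk
    simp only [Finset.mem_Icc] at hk
    have h1 : (k - 1) % m + (k - 1) / m * m = k - 1 := Nat.mod_add_div' _ _
    show (k - 1) % m + 1 + (k - 1) / m * m = k
    omega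
  · rintro ⟨i, j⟩ _
    rfl

/-- Strong law of large numbers for structurally i.i.d. sequences indexed from 1. -/
lemma siid_slln {Ω : Type*} [MeasurableSpace Ω] (μ : Measure Ω) [IsProbabilityMeasure μ]
    (X : ℕ → Ω → ℝ) (hint : Integrable (X 1) μ)
    (hident : ∀ k, 1 ≤ k → IdentDistrib (X k) (X 1) μ μ)
    (m : ℕ) (hm : 1 ≤ m)
    (hindep : ∀ i, 1 ≤ i → i ≤ m → iIndepFun
        (fun j : ℕ => X (i + j * m)) μ) :
    ∀ᵐ ω ∂μ, Tendsto (fun n : ℕ => (∑ k ∈ Finset.Icc 1 n, X k ω) / n) atTop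
      (𝓝 (∫ ω, X 1 ω ∂μ)) := by
  set c := ∫ ω, X 1 ω ∂μ with hc
  have hsub : ∀ i, 1 ≤ i → i ≤ m → ∀ᵐ ω ∂μ, Tendsto
      (fun J : ℕ => (∑ j ∈ Finset.range J, X (i + j * m) ω) / J) atTop (𝓝 c) := by
    intro i h1 h2
    have hid : ∀ j : ℕ, IdentDistrib (fun ω => X (i + j * m) ω) (fun ω => X (i + 0 * m) ω) μ μ :=
      fun j => (hident _ (by omega)).trans (hident _ (by omega)).symm
    have h0 : Integrable (fun ω => X (i + 0 * m) ω) μ :=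
      ((hident _ (by omega)).integrable_iff).mpr hint
    have hpi : Pairwise (Function.onFun (IndepFun · · μ) fun j : ℕ => X (i + j * m)) :=
      fun j j' hjj' => (hindep i h1 h2).indepFun hjj'
    have hlaw := strong_law_ae_real (fun j : ℕ => X (i + j * m)) h0 hpi hid
    have heq : ∫ x, X i x ∂μ = c := (hident i (by omega)).integral_eq
    simpa [heq] using hlaw
  have hall : ∀ᵐ ω ∂μ, ∀ i : ℕ, 1 ≤ i → i ≤ m → Tendsto
      (fun J : ℕ => (∑ j ∈ Finset.range J, X (i + j * m) ω) / J) atTop (𝓝 c) := by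
    rw [ae_all_iff]
    intro i
    by_cases h : 1 ≤ i ∧ i ≤ m
    · filter_upwards [hsub i h.1 h.2] with ω hω _ _ using hω
    · exact ae_of_all _ fun ω h1 h2 => absurd ⟨h1, h2⟩ h
  filter_upwards [hall] with ω hω
  -- auxiliary limit : ((n + a) / (m * n)) → 1/m
  have haux : ∀ a : ℝ, Tendsto (fun n : ℕ => ((n : ℝ) + a) / (m * n)) atTop (𝓝 (1 / (m : ℝ))) := by
    intro a
    have hmne : (m : ℝ) ≠ 0 := by positivity
    have h1 : Tendsto (fun n : ℕ => (1 + a * (1 / (n : ℝ))) / m) atTop (𝓝 ((1 + a * 0) / m)) :=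
      (tendsto_const_nhds.add (tendsto_const_nhds.mul tendsto_one_div_atTop_nhds_zero_nat)).div_const _
    have h1' : Tendsto (fun n : ℕ => (1 + a * (1 / (n : ℝ))) / m) atTop (𝓝 (1 / (m : ℝ))) := by
      simpa using h1
    apply h1'.congr'
    filter_upwards [eventually_ge_atTop 1] with n hn
    have hn0 : (0 : ℝ) < n := by
      have : (0 : ℕ) < n := hn
      exact_mod_cast this
    have hm0 : (0 : ℝ) < m := by positivity
    rw [div_eq_div_iff hm0.ne' (by positivity : ((m:ℝ) * n) ≠ 0), mul_one_div]
    field_simp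
  have hdecomp : ∀ n, (∑ k ∈ Finset.Icc 1 n, X k ω) / (n : ℝ) =
      ∑ i ∈ Finset.Icc 1 m, (∑ j ∈ Finset.range ((n + m - i) / m), X (i + j * m) ω) / n := by
    intro n
    rw [sum_Icc_eq_sum_residues (fun k => X k ω) m n hm, Finset.sum_div]
  have hlim : Tendsto (fun n : ℕ => ∑ i ∈ Finset.Icc 1 m,
      (∑ j ∈ Finset.range ((n + m - i) / m), X (i + j * m) ω) / n) atTop
      (𝓝 (∑ _i ∈ Finset.Icc 1 m, c / m)) := by
    apply tendsto_finset_sum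
    intro i hi
    simp only [Finset.mem_Icc] at hi
    obtain ⟨h1, h2⟩ := hi
    -- c_i n := (n + m - i) / m tends to atTop
    have hci : Tendsto (fun n : ℕ => (n + m - i) / m) atTop atTop := by
      refine tendsto_atTop_atTop.2 fun N => ⟨N * m + i, fun n hn => ?_⟩
      rw [Nat.le_div_iff_mul_le (by omega : 0 < m)]
      revert hn
      generalize N * m = p
      omega
    have hfirst : Tendsto (fun n : ℕ =>
        (∑ j ∈ Finset.range ((n + m - i) / m), X (i + j * m) ω) / (((n + m - i) / m : ℕ) : ℝ))
        atTop (𝓝 c) := (hω i h1 h2).comp hci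
    have hratio : Tendsto (fun n : ℕ => (((n + m - i) / m : ℕ) : ℝ) / n) atTop (𝓝 (1 / (m : ℝ))) := by
      refine tendsto_of_tendsto_of_tendsto_of_le_of_le' (haux (1 - m)) (haux ((m : ℝ) - 1)) ?_ ?_
      · filter_upwards [eventually_ge_atTop (m + 1)] with n hn
        set q := (n + m - i) / m with hq
        have hb1 : m * q ≤ n + m - i := Nat.mul_div_le _ _
        have hb2 : n + m - i < m * q + m := by
          have h := (Nat.div_lt_iff_lt_mul (by omega : 0 < m)).1 (Nat.lt_succ_self ((n + m - i) / m))
          calc n + m - i < ((n + m - i) / m + 1) * m := h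
          _ = m * q + m := by rw [← hq]; ring
        have hr1 : (n : ℝ) + 1 - m ≤ m * q := by
          have : n + 1 ≤ m * q + m := by omega
          have := (Nat.cast_le (α := ℝ)).2 this
          push_cast at this ⊢
          linarith
        have hnpos : (0 : ℝ) < n := by
          have : (0 : ℕ) < n := by omega
          exact_mod_cast this
        have hmpos : (0 : ℝ) < m := by exact_mod_cast (by omega : 0 < m)
        rw [div_le_div_iff₀ (by positivity) hnpos]
        calc ((n : ℝ) + (1 - m)) * n = ((n : ℝ) + 1 - m) * n := by ring
        _ ≤ ((m : ℝ) * q) * n := by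
            apply mul_le_mul_of_nonneg_right hr1 (le_of_lt hnpos)
        _ = (q : ℝ) * (m * n) := by ring
      · filter_upwards [eventually_ge_atTop 1] with n hn
        set q := (n + m - i) / m with hq
        have hb1 : m * q ≤ n + m - i := Nat.mul_div_le _ _
        have hr2 : (m : ℝ) * q ≤ n + m - 1 := by
          have : m * q ≤ n + m - 1 := by omega
          have := (Nat.cast_le (α := ℝ)).2 this
          push_cast [(by omega : 1 ≤ n + m)] at this
          push_cast
          linarith
        have hnpos : (0 : ℝ) < n := by
          have : (0 : ℕ) < n := by omega
          exact_mod_cast this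
        have hmpos : (0 : ℝ) < m := by exact_mod_cast (by omega : 0 < m)
        rw [div_le_div_iff₀ hnpos (by positivity)]
        calc (q : ℝ) * (m * n) = ((m : ℝ) * q) * n := by ring
        _ ≤ ((n : ℝ) + m - 1) * n := mul_le_mul_of_nonneg_right hr2 (le_of_lt hnpos)
        _ = ((n : ℝ) + ((m : ℝ) - 1)) * n := by ring
    have hprod := hfirst.mul hratio
    have hcm : c * (1 / (m : ℝ)) = c / m := by ring
    rw [hcm] at hprod
    apply hprod.congr'
    filter_upwards [hci.eventually_ge_atTop 1, eventually_ge_atTop 1] with n hq1 hn1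
    have hqne : (((n + m - i) / m : ℕ) : ℝ) ≠ 0 := by
      have : (0 : ℕ) < (n + m - i) / m := by omega
      positivity
    have hnne : (n : ℝ) ≠ 0 := by
      have : (0 : ℕ) < n := by omega
      positivity
    field_simp
  have hsum : (∑ _i ∈ Finset.Icc 1 m, c / (m : ℝ)) = c := by
    rw [Finset.sum_const, Nat.card_Icc]
    have hmne : (m : ℝ) ≠ 0 := by positivity
    simp only [Nat.add_sub_cancel, nsmul_eq_mul]
    field_simp
  rw [← hsum]
  exact hlim.congr fun n => (hdecomp n).symm

/-- Deterministic renewal–reward lemma. -/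
lemma renewal_det (t G : ℕ → ℝ) (a b : ℝ) (ha : 0 < a) (hmono : StrictMono t)
    (ht : Tendsto (fun n : ℕ => t n / n) atTop (𝓝 a))
    (hG : Tendsto (fun n : ℕ => G n / n) atTop (𝓝 b)) :
    Tendsto (fun T : ℝ => (1 / T) * G (Set.ncard {n : ℕ | 1 ≤ n ∧ t n ≤ T})) atTop
      (𝓝 (b / a)) := by
  -- t tends to infinity
  have httop : Tendsto t atTop atTop := by
    have h1 : Tendsto (fun n : ℕ => t n / n * n) atTop atTop :=
      Tendsto.pos_mul_atTop ha ht tendsto_natCast_atTop_atTop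
    apply h1.congr'
    filter_upwards [eventually_ge_atTop 1] with n hn
    have hnne : (n : ℝ) ≠ 0 := by
      have : (0 : ℕ) < n := by omega
      positivity
    field_simp
  have hfin : ∀ T : ℝ, {n : ℕ | 1 ≤ n ∧ t n ≤ T}.Finite := by
    intro T
    obtain ⟨N, hN⟩ := (httop.eventually (eventually_gt_atTop T)).exists_forall_of_atTop
    apply (Set.finite_lt_nat N).subset
    intro n hn
    rw [Set.mem_setOf_eq]
    by_contra h
    push_neg at h
    exact absurd hn.2 (not_le.2 (hN n h))
  set M : ℝ → ℕ := fun T => Set.ncard {n : ℕ | 1 ≤ n ∧ t n ≤ T} with hMdef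
  have hncardIcc : ∀ N : ℕ, Set.ncard (Set.Icc 1 N) = N := by
    intro N
    rw [← Finset.coe_Icc, Set.ncard_coe_finset, Nat.card_Icc]
    omega
  have hIcc : ∀ T : ℝ, {n : ℕ | 1 ≤ n ∧ t n ≤ T} = Set.Icc 1 (M T) := by
    intro T
    have hexN : ∃ N, {n : ℕ | 1 ≤ n ∧ t n ≤ T} = Set.Icc 1 N := by
      rcases Set.eq_empty_or_nonempty {n : ℕ | 1 ≤ n ∧ t n ≤ T} with h | h
      · exact ⟨0, by simp [h]⟩
      · have hsne : ((hfin T).toFinset).Nonempty := by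
          rwa [Set.Finite.toFinset_nonempty]
        set N := ((hfin T).toFinset).max' hsne with hN
        have hNmem : N ∈ {n : ℕ | 1 ≤ n ∧ t n ≤ T} := by
          have := Finset.max'_mem _ hsne
          rwa [Set.Finite.mem_toFinset] at this
        refine ⟨N, Set.ext fun n => ?_⟩
        simp only [Set.mem_setOf_eq, Set.mem_Icc]
        constructor
        · rintro ⟨h1, h2⟩
          exact ⟨h1, Finset.le_max' _ _ (((hfin T).mem_toFinset).2 ⟨h1, h2⟩)⟩
        · rintro ⟨h1, h2⟩
          exact ⟨h1, le_trans (hmono.monotone h2) hNmem.2⟩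
    obtain ⟨N, hN⟩ := hexN
    have : M T = N := by
      rw [show M T = Set.ncard {n : ℕ | 1 ≤ n ∧ t n ≤ T} from rfl, hN, hncardIcc]
    rw [hN, this]
  have hM1 : ∀ T : ℝ, 1 ≤ M T → t (M T) ≤ T := by
    intro T h
    have : M T ∈ {n : ℕ | 1 ≤ n ∧ t n ≤ T} := by
      rw [hIcc T]; exact ⟨h, le_rfl⟩
    exact this.2
  have hM2 : ∀ T : ℝ, T < t (M T + 1) := by
    intro T
    have : M T + 1 ∉ {n : ℕ | 1 ≤ n ∧ t n ≤ T} := by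
      rw [hIcc T]
      simp only [Set.mem_Icc]
      omega
    simp only [Set.mem_setOf_eq, not_and] at this
    exact not_le.1 (this (by omega))
  have hMtop : Tendsto M atTop atTop := by
    refine tendsto_atTop.2 fun N => ?_
    filter_upwards [eventually_ge_atTop (t (N + 1))] with T hT
    have hsub : Set.Icc 1 (N + 1) ⊆ {n : ℕ | 1 ≤ n ∧ t n ≤ T} := by
      intro n hn
      rw [Set.mem_Icc] at hn
      exact ⟨hn.1, le_trans (hmono.monotone hn.2) hT⟩
    have h2 := Set.ncard_le_ncard hsub (hfin T)
    rw [hncardIcc] at h2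
    rw [show M T = Set.ncard {n : ℕ | 1 ≤ n ∧ t n ≤ T} from rfl]
    omega
  have hev1 : ∀ᶠ T in (atTop : Filter ℝ), 1 ≤ M T := hMtop.eventually_ge_atTop 1
  -- T / M T → a
  have hlow : Tendsto (fun T : ℝ => t (M T) / (M T : ℝ)) atTop (𝓝 a) := ht.comp hMtop
  have hM1top : Tendsto (fun T : ℝ => M T + 1) atTop atTop :=
    (tendsto_add_atTop_nat 1).comp hMtop
  have hup1 : Tendsto (fun T : ℝ => t (M T + 1) / ((M T + 1 : ℕ) : ℝ)) atTop (𝓝 a) :=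
    ht.comp hM1top
  have hup2 : Tendsto (fun T : ℝ => (((M T : ℝ)) + 1) / (M T : ℝ)) atTop (𝓝 1) := by
    have h0 : Tendsto (fun T : ℝ => 1 + 1 / (M T : ℝ)) atTop (𝓝 (1 + 0)) :=
      tendsto_const_nhds.add (tendsto_one_div_atTop_nhds_zero_nat.comp hMtop)
    rw [add_zero] at h0
    apply h0.congr'
    filter_upwards [hev1] with T h
    have : (M T : ℝ) ≠ 0 := by
      have : (0 : ℕ) < M T := h
      positivity
    field_simp
  have hup : Tendsto (fun T : ℝ => t (M T + 1) / ((M T + 1 : ℕ) : ℝ) * (((M T : ℝ) + 1) / (M T : ℝ)))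
      atTop (𝓝 a) := by
    have := hup1.mul hup2
    rwa [mul_one] at this
  have hTdiv : Tendsto (fun T : ℝ => T / (M T : ℝ)) atTop (𝓝 a) := by
    refine tendsto_of_tendsto_of_tendsto_of_le_of_le' hlow hup ?_ ?_
    · filter_upwards [hev1] with T h
      have hMpos : (0 : ℝ) < (M T : ℝ) := by exact_mod_cast (h : 0 < M T)
      exact div_le_div_of_nonneg_right (hM1 T h) hMpos.le |>.trans_eq rfl
    · filter_upwards [hev1] with T h
      have hMpos : (0 : ℝ) < (M T : ℝ) := by exact_mod_cast (h : 0 < M T)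
      have hMp1 : ((M T + 1 : ℕ) : ℝ) = (M T : ℝ) + 1 := by push_cast; ring
      have step1 : T / (M T : ℝ) ≤ t (M T + 1) / (M T : ℝ) :=
        div_le_div_of_nonneg_right (hM2 T).le hMpos.le
      have step2 : t (M T + 1) / (M T : ℝ) =
          t (M T + 1) / ((M T + 1 : ℕ) : ℝ) * (((M T : ℝ) + 1) / (M T : ℝ)) := by
        rw [hMp1]
        have h1 : (M T : ℝ) + 1 ≠ 0 := by positivity
        field_simp
      linarith [step1, step2.le, step2.ge]
  have hinv : Tendsto (fun T : ℝ => (M T : ℝ) / T) atTop (𝓝 a⁻¹) := by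
    have := hTdiv.inv₀ ha.ne'
    apply this.congr
    intro T
    rw [inv_div]
  have hGcomp : Tendsto (fun T : ℝ => G (M T) / (M T : ℝ)) atTop (𝓝 b) := hG.comp hMtop
  have hfinal := hGcomp.mul hinv
  rw [← div_eq_mul_inv] at hfinal
  apply hfinal.congr'
  filter_upwards [hev1, eventually_ge_atTop (1 : ℝ)] with T h hT
  have hMne : (M T : ℝ) ≠ 0 := by
    have : (0 : ℕ) < M T := h
    positivity
  have hTne : T ≠ 0 := by linarith
  field_simp
  rfl

/-- Theorem 2: renewal-reward theorem for s.i.i.d. inter-renewal times `S_k` and s.i.i.d.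
rewards `g_k`. With `T_D(k) = S_1 + ⋯ + S_k` and `M(T) = #{k ≥ 1 : T_D(k) ≤ T}`, almost surely
`(1/T) ∑_{k=1}^{M(T)} g_k → E[g_1] / E[S_1]` as `T → ∞`. -/
theorem stmt2 {Ω : Type*} [MeasurableSpace Ω] (μ : Measure Ω) [IsProbabilityMeasure μ]
    (S g : ℕ → Ω → ℝ)
    (hSpos : ∀ k, 1 ≤ k → ∀ ω, 0 < S k ω)
    (hgnonneg : ∀ k, 1 ≤ k → ∀ ω, 0 ≤ g k ω)
    (hSint : Integrable (S 1) μ)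
    (hSmean : 0 < ∫ ω, S 1 ω ∂μ)
    (hgint : ∀ k, 1 ≤ k → Integrable (g k) μ)
    (hSident : ∀ k, 1 ≤ k → IdentDistrib (S k) (S 1) μ μ)
    (hgident : ∀ k, 1 ≤ k → IdentDistrib (g k) (g 1) μ μ)
    (hSindep : ∃ m : ℕ, 1 ≤ m ∧ ∀ i, 1 ≤ i → i ≤ m →
      iIndepFun
        (fun j : ℕ => S (i + j * m)) μ)
    (hgindep : ∃ m' : ℕ, 1 ≤ m' ∧ ∀ i, 1 ≤ i → i ≤ m' →
      iIndepFun
        (fun j : ℕ => g (i + j * m')) μ) :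
    ∀ᵐ ω ∂μ, Tendsto (fun T : ℝ =>
        (1 / T) * ∑ k ∈ Finset.Icc 1
          (Set.ncard {n : ℕ | 1 ≤ n ∧ (∑ j ∈ Finset.Icc 1 n, S j ω) ≤ T}), g k ω)
      atTop (nhds ((∫ ω, g 1 ω ∂μ) / (∫ ω, S 1 ω ∂μ))) := by
  obtain ⟨m, hm, hSi⟩ := hSindep
  obtain ⟨m', hm', hgi⟩ := hgindep
  have hS := siid_slln μ S hSint hSident m hm hSi
  have hg := siid_slln μ g (hgint 1 le_rfl) hgident m' hm' hgi
  filter_upwards [hS, hg] with ω hSω hgω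
  have hmono : StrictMono (fun n : ℕ => ∑ j ∈ Finset.Icc 1 n, S j ω) := by
    apply strictMono_nat_of_lt_succ
    intro n
    rw [Finset.sum_Icc_succ_top (by omega : 1 ≤ n + 1)]
    exact lt_add_of_pos_right _ (hSpos (n + 1) (by omega) ω)
  exact renewal_det (fun n => ∑ j ∈ Finset.Icc 1 n, S j ω)
    (fun n => ∑ k ∈ Finset.Icc 1 n, g k ω) _ _ hSmean hmono hSω hgω
end

section
/- Let d ≥ 0 and let ((X_k, I_k))_{k≥0} be an i.i.d. sequence of pairs of nonnegative integrable real random variables with 0 < E[X_0] + E[I_0] < ∞. For k ≥ 1 define g_k = min{(X_{k−1} + I_k + X_k − d)^+, X_k + I_k}, T_D(k) = ∑_{j=1}^{k} (X_j + I_j), and for T > 0, M(T) = #{k ≥ 1 : T_D(k) ≤ T}. Then almost surely lim_{T→∞} (1/T) ∑_{k=1}^{M(T)} g_k = E[g_1] / (E[X_0] + E[I_0]). -/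
open MeasureTheory ProbabilityTheory Filter

section Aux

lemma half_tendsto (u : ℕ → ℕ) (hlow : ∀ n : ℕ, (n : ℝ)/2 - 1 ≤ (u n : ℝ))
    (hup : ∀ n : ℕ, (u n : ℝ) ≤ (n : ℝ)/2 + 1) :
    Tendsto (fun n => (u n : ℝ)/n) atTop (nhds (1/2)) := by
  have key : ∀ c : ℝ, Tendsto (fun n : ℕ => ((n : ℝ)/2 + c)/n) atTop (nhds (1/2)) := by
    intro c
    have h : (fun n : ℕ => ((n : ℝ)/2 + c)/n) =ᶠ[atTop] fun n : ℕ => 1/2 + c * (1/n) := by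
      filter_upwards [eventually_gt_atTop 0] with n hn
      have : (n : ℝ) ≠ 0 := Nat.cast_ne_zero.2 hn.ne'
      field_simp
      try ring
    rw [tendsto_congr' h]
    have := tendsto_one_div_atTop_nhds_zero_nat (𝕜 := ℝ)
    simpa using tendsto_const_nhds.add (this.const_mul c)
  have h1 : Tendsto (fun n : ℕ => ((n : ℝ)/2 + (-1))/n) atTop (nhds (1/2)) := key (-1)
  refine tendsto_of_tendsto_of_tendsto_of_le_of_le' h1 (key 1) ?_ ?_
  · filter_upwards [eventually_gt_atTop 0] with n hn
    have hn' : (0:ℝ) < n := by exact_mod_cast hn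
    have := hlow n
    gcongr
    linarith
  · filter_upwards [eventually_gt_atTop 0] with n hn
    have hn' : (0:ℝ) < n := by exact_mod_cast hn
    gcongr
    exact hup n

lemma half_atTop (u : ℕ → ℕ) (hlow : ∀ n : ℕ, (n : ℝ)/2 - 1 ≤ (u n : ℝ)) :
    Tendsto u atTop atTop := by
  refine tendsto_atTop.2 fun b => ?_
  filter_upwards [eventually_ge_atTop (2*b + 2)] with n hn
  have := hlow n
  have hn' : (2*(b:ℝ) + 2 : ℝ) ≤ n := by exact_mod_cast hn
  have hb : (b : ℝ) ≤ u n := by linarith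
  exact_mod_cast hb

lemma ceil_half_low (n : ℕ) : (n : ℝ)/2 - 1 ≤ (((n+1)/2 : ℕ) : ℝ) := by
  have e : n + 1 ≤ 2*((n+1)/2) + 1 := by omega
  have c : (n:ℝ) + 1 ≤ 2 * (((n+1)/2 : ℕ) : ℝ) + 1 := by exact_mod_cast e
  linarith

lemma ceil_half_up (n : ℕ) : (((n+1)/2 : ℕ) : ℝ) ≤ (n : ℝ)/2 + 1 := by
  have e : 2*((n+1)/2) ≤ n + 1 := by omega
  have c : 2 * (((n+1)/2 : ℕ) : ℝ) ≤ (n:ℝ) + 1 := by exact_mod_cast e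
  linarith

lemma floor_half_low (n : ℕ) : (n : ℝ)/2 - 1 ≤ ((n/2 : ℕ) : ℝ) := by
  have e : n ≤ 2*(n/2) + 1 := by omega
  have c : (n:ℝ) ≤ 2 * ((n/2 : ℕ) : ℝ) + 1 := by exact_mod_cast e
  linarith

lemma floor_half_up (n : ℕ) : ((n/2 : ℕ) : ℝ) ≤ (n : ℝ)/2 + 1 := by
  have e : 2*(n/2) ≤ n := by omega
  have c : 2 * ((n/2 : ℕ) : ℝ) ≤ (n:ℝ) := by exact_mod_cast e
  linarith

/-- even/odd combining -/
lemma evenodd_tendsto (a b c : ℕ → ℝ) (L : ℝ)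
    (hca : ∀ n, c (2*n+1) = a n) (hcb : ∀ n, c (2*n+2) = b n)
    (ha : Tendsto (fun n => (∑ i ∈ Finset.range n, a i)/n) atTop (nhds L))
    (hb : Tendsto (fun n => (∑ i ∈ Finset.range n, b i)/n) atTop (nhds L)) :
    Tendsto (fun n => (∑ k ∈ Finset.Icc 1 n, c k)/n) atTop (nhds L) := by
  have key : ∀ n, ∑ k ∈ Finset.Icc 1 n, c k =
      (∑ i ∈ Finset.range ((n+1)/2), a i) + ∑ i ∈ Finset.range (n/2), b i := by
    intro n
    induction n with
    | zero => simp
    | succ n ih =>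
      rw [Finset.sum_Icc_succ_top (by omega), ih]
      rcases Nat.even_or_odd n with ⟨m, hm⟩ | ⟨m, hm⟩
      · subst hm
        have h4 : c (m+m+1) = a m := by
          have := hca m; rw [show 2*m+1 = m+m+1 by ring] at this; exact this
        rw [show (m+m+1+1)/2 = m+1 from by omega, show (m+m+1)/2 = m from by omega,
          show (m+m)/2 = m from by omega, h4]
        simp [Finset.sum_range_succ]
        ring
      · subst hm
        have h4 : c (2*m+1+1) = b m := by
          have := hcb m; rw [show 2*m+2 = 2*m+1+1 by ring] at this; exact this
        rw [show (2*m+1+1+1)/2 = m+1 from by omega, show (2*m+1+1)/2 = m+1 from by omega,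
          show (2*m+1)/2 = m from by omega, h4]
        simp [Finset.sum_range_succ]
        ring
  have hu : Tendsto (fun n : ℕ => ((((n+1)/2 : ℕ)) : ℝ)/n) atTop (nhds (1/2)) :=
    half_tendsto _ (fun n => ceil_half_low n) (fun n => ceil_half_up n)
  have hv : Tendsto (fun n : ℕ => (((n/2 : ℕ)) : ℝ)/n) atTop (nhds (1/2)) :=
    half_tendsto _ (fun n => floor_half_low n) (fun n => floor_half_up n)
  have huT : Tendsto (fun n : ℕ => (n+1)/2) atTop atTop :=
    half_atTop _ (fun n => ceil_half_low n)
  have hvT : Tendsto (fun n : ℕ => n/2) atTop atTop :=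
    half_atTop _ (fun n => floor_half_low n)
  have hA : Tendsto (fun n : ℕ =>
      ((∑ i ∈ Finset.range ((n+1)/2), a i)/(((n+1)/2 : ℕ) : ℝ)) * ((((n+1)/2 : ℕ) : ℝ)/n))
      atTop (nhds (L * (1/2))) := (ha.comp huT).mul hu
  have hB : Tendsto (fun n : ℕ =>
      ((∑ i ∈ Finset.range (n/2), b i)/(((n/2 : ℕ)) : ℝ)) * ((((n/2 : ℕ)) : ℝ)/n))
      atTop (nhds (L * (1/2))) := (hb.comp hvT).mul hv
  have := hA.add hB
  rw [show L * (1/2) + L * (1/2) = L by ring] at this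
  refine this.congr' ?_
  filter_upwards [eventually_ge_atTop 2] with n hn
  have hu0 : (((n+1)/2 : ℕ) : ℝ) ≠ 0 := by
    have : 1 ≤ (n+1)/2 := by omega
    positivity
  have hv0 : (((n/2 : ℕ)) : ℝ) ≠ 0 := by
    have : 1 ≤ n/2 := by omega
    positivity
  rw [key n]
  field_simp
  try ring

lemma renewal_det_s6 (s R : ℕ → ℝ) (m L : ℝ) (hm : 0 < m) (hmono : Monotone s)
    (hs : Tendsto (fun n => s n / n) atTop (nhds m))
    (hR : Tendsto (fun n => R n / n) atTop (nhds L)) :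
    Tendsto (fun T : ℝ => (1/T) * R (Set.ncard {n : ℕ | 1 ≤ n ∧ s n ≤ T})) atTop
      (nhds (L/m)) := by
  have hsT : Tendsto s atTop atTop := by
    have h1 : Tendsto (fun n : ℕ => (s n / n) * n) atTop atTop :=
      Tendsto.pos_mul_atTop hm hs tendsto_natCast_atTop_atTop
    refine (tendsto_congr' ?_).1 h1
    filter_upwards [eventually_gt_atTop 0] with n hn
    have : (n : ℝ) ≠ 0 := Nat.cast_ne_zero.2 hn.ne'
    field_simp
  set A : ℝ → Set ℕ := fun T => {n : ℕ | 1 ≤ n ∧ s n ≤ T} with hA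
  have hAfin : ∀ T, (A T).Finite := by
    intro T
    obtain ⟨N, hN⟩ := eventually_atTop.1 (hsT.eventually_ge_atTop (T+1))
    refine (Set.finite_Iio N).subset fun n hn => ?_
    by_contra h
    have h' : N ≤ n := by simpa [Set.mem_Iio, not_lt] using h
    have := hN n h'
    exact absurd hn.2 (by linarith)
  set M : ℝ → ℕ := fun T => (A T).ncard with hM
  have hAeq : ∀ T, A T = Set.Icc 1 (M T) := by
    intro T
    rcases Set.eq_empty_or_nonempty (A T) with he | hne
    · rw [hM]; simp only [he, Set.ncard_empty]
      exact (Set.Icc_eq_empty (by omega)).symm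
    · have hbdd : BddAbove (A T) := (hAfin T).bddAbove
      have hNmem : sSup (A T) ∈ A T := Nat.sSup_mem hne hbdd
      have heq : A T = Set.Icc 1 (sSup (A T)) := by
        ext n
        constructor
        · intro hn
          exact ⟨hn.1, le_csSup hbdd hn⟩
        · rintro ⟨h1, h2⟩
          exact ⟨h1, le_trans (hmono h2) hNmem.2⟩
      have hcard : M T = sSup (A T) := by
        have h2 := congrArg Set.ncard heq
        rw [← Finset.coe_Icc, Set.ncard_coe_finset, Nat.card_Icc] at h2
        show (A T).ncard = sSup (A T)
        omega
      rw [heq, hcard]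
  have hMmem : ∀ T, 1 ≤ M T → s (M T) ≤ T := by
    intro T h1
    have : M T ∈ A T := by rw [hAeq]; exact ⟨h1, le_rfl⟩
    exact this.2
  have hMsucc : ∀ T, T < s (M T + 1) := by
    intro T
    by_contra h
    push_neg at h
    have : M T + 1 ∈ A T := ⟨by omega, h⟩
    rw [hAeq, Set.mem_Icc] at this
    omega
  have hMtop : Tendsto M atTop atTop := by
    refine tendsto_atTop.2 fun n₀ => ?_
    filter_upwards [eventually_ge_atTop (s (n₀ + 1))] with T hT
    have hmem : n₀ + 1 ∈ A T := ⟨by omega, hT⟩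
    rw [hAeq, Set.mem_Icc] at hmem
    omega
  have hM1 : ∀ᶠ T in atTop, 1 ≤ M T := hMtop.eventually_ge_atTop 1
  have hTM : Tendsto (fun T => T / (M T : ℝ)) atTop (nhds m) := by
    have hlow : Tendsto (fun T => s (M T) / (M T : ℝ)) atTop (nhds m) := hs.comp hMtop
    have haux : Tendsto (fun n : ℕ => s (n+1) / (((n+1 : ℕ)) : ℝ)) atTop (nhds m) :=
      hs.comp (tendsto_add_atTop_nat 1)
    have hratio : Tendsto (fun n : ℕ => (((n+1 : ℕ)) : ℝ) / (n : ℝ)) atTop (nhds 1) := by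
      have h : (fun n : ℕ => (((n+1 : ℕ)) : ℝ) / (n : ℝ)) =ᶠ[atTop]
          fun n : ℕ => 1 + 1/(n : ℝ) := by
        filter_upwards [eventually_gt_atTop 0] with n hn
        have : (n : ℝ) ≠ 0 := Nat.cast_ne_zero.2 hn.ne'
        push_cast
        field_simp
      rw [tendsto_congr' h]
      simpa using tendsto_const_nhds.add (tendsto_one_div_atTop_nhds_zero_nat (𝕜 := ℝ))
    have hup : Tendsto (fun T => (s (M T + 1) / (((M T + 1 : ℕ)) : ℝ))
        * ((((M T + 1 : ℕ)) : ℝ) / (M T : ℝ))) atTop (nhds (m * 1)) :=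
      (haux.comp hMtop).mul (hratio.comp hMtop)
    rw [mul_one] at hup
    have hup' : Tendsto (fun T => s (M T + 1) / (M T : ℝ)) atTop (nhds m) := by
      refine hup.congr fun T => ?_
      have h1 : (((M T + 1 : ℕ)) : ℝ) ≠ 0 := by positivity
      field_simp
    refine tendsto_of_tendsto_of_tendsto_of_le_of_le' hlow hup' ?_ ?_
    · filter_upwards [hM1] with T h1
      have hpos : (0:ℝ) < (M T : ℝ) := by exact_mod_cast h1
      exact div_le_div_of_nonneg_right (hMmem T h1) hpos.le
    · filter_upwards [hM1] with T h1
      have hpos : (0:ℝ) < (M T : ℝ) := by exact_mod_cast h1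
      exact div_le_div_of_nonneg_right (hMsucc T).le hpos.le
  have hMT : Tendsto (fun T => (M T : ℝ) / T) atTop (nhds m⁻¹) := by
    have := hTM.inv₀ hm.ne'
    refine this.congr fun T => ?_
    rw [inv_div]
  have hfinal : Tendsto (fun T => (R (M T) / (M T : ℝ)) * ((M T : ℝ) / T)) atTop
      (nhds (L * m⁻¹)) := (hR.comp hMtop).mul hMT
  rw [show L * m⁻¹ = L / m from (div_eq_mul_inv L m).symm] at hfinal
  refine hfinal.congr' ?_
  filter_upwards [hM1] with T h1
  have hpos : ((M T : ℝ)) ≠ 0 := by positivity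
  field_simp
  try ring

lemma iIndepFun_ae_eq' {Ω β : Type*} [MeasurableSpace Ω] {μ : Measure Ω}
    [MeasurableSpace β] {f f' : ℕ → Ω → β}
    (hf : iIndepFun f μ)
    (h : ∀ i, f i =ᵐ[μ] f' i) :
    iIndepFun f' μ := by
  rw [iIndepFun_iff_measure_inter_preimage_eq_mul] at hf ⊢
  intro S sets hsets
  have hae : ∀ᵐ ω ∂μ, ∀ i ∈ S, f i ω = f' i ω :=
    (Filter.eventually_all_finset S).2 fun i _ => h i
  have h1 : μ (⋂ i ∈ S, f' i ⁻¹' sets i) = μ (⋂ i ∈ S, f i ⁻¹' sets i) := by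
    apply measure_congr
    rw [Filter.eventuallyEq_set]
    filter_upwards [hae] with ω hω
    simp only [Set.mem_iInter, Set.mem_preimage]
    constructor
    · intro hmem i hi; rw [hω i hi]; exact hmem i hi
    · intro hmem i hi; rw [← hω i hi]; exact hmem i hi
  have h2 : ∀ i ∈ S, μ (f' i ⁻¹' sets i) = μ (f i ⁻¹' sets i) := by
    intro i hi
    apply measure_congr
    rw [Filter.eventuallyEq_set]
    filter_upwards [h i] with ω hω
    simp [Set.mem_preimage, hω]
  rw [h1, hf S hsets]
  exact (Finset.prod_congr rfl h2).symm

lemma identDistrib_pair {Ω : Type*} [MeasurableSpace Ω] {μ : Measure Ω}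
    [IsProbabilityMeasure μ] {β γ : Type*} [MeasurableSpace β] [MeasurableSpace γ]
    {f f' : Ω → β} {g g' : Ω → γ}
    (hfg : IndepFun f g μ) (hfg' : IndepFun f' g' μ)
    (hf : IdentDistrib f f' μ μ) (hg : IdentDistrib g g' μ μ) :
    IdentDistrib (fun ω => (f ω, g ω)) (fun ω => (f' ω, g' ω)) μ μ := by
  refine ⟨hf.aemeasurable_fst.prodMk hg.aemeasurable_fst,
    hf.aemeasurable_snd.prodMk hg.aemeasurable_snd, ?_⟩
  rw [(indepFun_iff_map_prod_eq_prod_map_map hf.aemeasurable_fst hg.aemeasurable_fst).1 hfg,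
    (indepFun_iff_map_prod_eq_prod_map_map hf.aemeasurable_snd hg.aemeasurable_snd).1 hfg',
    hf.map_eq, hg.map_eq]

/-- the reward function -/
def psiR (d : ℝ) : (ℝ × ℝ) × (ℝ × ℝ) → ℝ :=
  fun p => min (max (p.1.1 + p.2.2 + p.2.1 - d) 0) (p.2.1 + p.2.2)

lemma psiR_meas (d : ℝ) : Measurable (psiR d) := by
  unfold psiR
  fun_prop

lemma abs_psiR_le (d : ℝ) (hd : 0 ≤ d) (p : (ℝ × ℝ) × (ℝ × ℝ)) :
    |psiR d p| ≤ |p.1.1| + 2*|p.2.1| + 2*|p.2.2| + d := by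
  unfold psiR
  have h1 := le_abs_self p.1.1
  have h2 := le_abs_self p.2.1
  have h3 := le_abs_self p.2.2
  have h4 := neg_abs_le p.2.1
  have h5 := neg_abs_le p.2.2
  have ha1 := abs_nonneg p.1.1
  have ha2 := abs_nonneg p.2.1
  have ha3 := abs_nonneg p.2.2
  rw [abs_le]
  constructor
  · have : -(|p.2.1| + |p.2.2|) ≤ min (max (p.1.1 + p.2.2 + p.2.1 - d) 0) (p.2.1 + p.2.2) := by
      apply le_min
      · linarith [le_max_right (p.1.1 + p.2.2 + p.2.1 - d) (0:ℝ)]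
      · linarith
    linarith
  · have : min (max (p.1.1 + p.2.2 + p.2.1 - d) 0) (p.2.1 + p.2.2) ≤
        max (p.1.1 + p.2.2 + p.2.1 - d) 0 := min_le_left _ _
    have hmax : max (p.1.1 + p.2.2 + p.2.1 - d) 0 ≤ |p.1.1| + |p.2.1| + |p.2.2| := by
      apply max_le
      · linarith
      · linarith
    linarith

lemma sum_Icc_one {M : Type*} [AddCommMonoid M] (f : ℕ → M) (n : ℕ) :
    ∑ k ∈ Finset.Icc 1 n, f k = ∑ i ∈ Finset.range n, f (i+1) := by
  induction n with
  | zero => simp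
  | succ n ih => rw [Finset.sum_Icc_succ_top (by omega), ih, Finset.sum_range_succ]

end Aux

/-- Theorem 4 (GI/GI/1/1): with `(X_k, I_k)` i.i.d. pairs of nonnegative integrable random
variables (service and idle times), `g_k = min ((X_{k-1} + I_k + X_k - d)⁺, X_k + I_k)`,
inter-departure times `X_k + I_k` and `M(T)` the number of departures by time `T`, almost
surely `(1/T) ∑_{k=1}^{M(T)} g_k → E[g_1] / (E[X_0] + E[I_0])`. -/
theorem stmt6 {Ω : Type*} [MeasurableSpace Ω] (μ : Measure Ω) [IsProbabilityMeasure μ]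
    (d : ℝ) (hd : 0 ≤ d) (X I : ℕ → Ω → ℝ)
    (hXnonneg : ∀ k ω, 0 ≤ X k ω) (hInonneg : ∀ k ω, 0 ≤ I k ω)
    (hXint : ∀ k, Integrable (X k) μ) (hIint : ∀ k, Integrable (I k) μ)
    (hident : ∀ k, IdentDistrib (fun ω => (X k ω, I k ω)) (fun ω => (X 0 ω, I 0 ω)) μ μ)
    (hindep : iIndepFun
      (fun k ω => (X k ω, I k ω)) μ)
    (hmean : 0 < (∫ ω, X 0 ω ∂μ) + ∫ ω, I 0 ω ∂μ) :
    ∀ᵐ ω ∂μ, Tendsto (fun T : ℝ =>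
        (1 / T) * ∑ k ∈ Finset.Icc 1
          (Set.ncard {n : ℕ | 1 ≤ n ∧ (∑ j ∈ Finset.Icc 1 n, (X j ω + I j ω)) ≤ T}),
            min (max (X (k - 1) ω + I k ω + X k ω - d) 0) (X k ω + I k ω))
      atTop
      (nhds ((∫ ω, min (max (X 0 ω + I 1 ω + X 1 ω - d) 0) (X 1 ω + I 1 ω) ∂μ) /
        ((∫ ω, X 0 ω ∂μ) + ∫ ω, I 0 ω ∂μ))) := by
  classical
  -- measurable modifications
  have hVae : ∀ k, AEMeasurable (fun ω => (X k ω, I k ω)) μ := fun k =>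
    (hident k).aemeasurable_fst
  set V' : ℕ → Ω → ℝ × ℝ := fun k => (hVae k).mk _ with hV'
  have hVmeas : ∀ k, Measurable (V' k) := fun k => (hVae k).measurable_mk
  have hVeq : ∀ k, (fun ω => (X k ω, I k ω)) =ᵐ[μ] V' k := fun k => (hVae k).ae_eq_mk
  have hident' : ∀ k, IdentDistrib (V' k) (V' 0) μ μ := by
    intro k
    refine ⟨(hVmeas k).aemeasurable, (hVmeas 0).aemeasurable, ?_⟩
    rw [← Measure.map_congr (hVeq k), ← Measure.map_congr (hVeq 0)]
    exact (hident k).map_eq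
  have hindep' : iIndepFun V' μ :=
    iIndepFun_ae_eq' hindep hVeq
  have hident1' : ∀ k, IdentDistrib (V' k) (V' 1) μ μ := fun k =>
    (hident' k).trans (hident' 1).symm
  -- marginals integrable
  have hXint' : ∀ k, Integrable (fun ω => (V' k ω).1) μ := by
    intro k
    refine (hXint k).congr ?_
    filter_upwards [hVeq k] with ω hω
    rw [← hω]
  have hIint' : ∀ k, Integrable (fun ω => (V' k ω).2) μ := by
    intro k
    refine (hIint k).congr ?_
    filter_upwards [hVeq k] with ω hω
    rw [← hω]
  -- pair distributions
  have hpair : ∀ j k : ℕ, j ≠ k →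
      IdentDistrib (fun ω => (V' j ω, V' k ω)) (fun ω => (V' 0 ω, V' 1 ω)) μ μ := by
    intro j k hjk
    exact identDistrib_pair (hindep'.indepFun hjk) (hindep'.indepFun (by omega))
      (hident' j) (hident1' k)
  -- integrability of rewards
  have hgint : ∀ j k : ℕ, Integrable (fun ω => psiR d (V' j ω, V' k ω)) μ := by
    intro j k
    have hmeas : AEStronglyMeasurable (fun ω => psiR d (V' j ω, V' k ω)) μ :=
      ((psiR_meas d).comp ((hVmeas j).prodMk (hVmeas k))).aestronglyMeasurable
    have hbound : Integrable
        (fun ω => |(V' j ω).1| + 2*|(V' k ω).1| + 2*|(V' k ω).2| + d) μ := by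
      exact ((((hXint' j).abs.add ((hXint' k).abs.const_mul 2)).add
        ((hIint' k).abs.const_mul 2)).add (integrable_const d))
    refine hbound.mono hmeas ?_
    filter_upwards with ω
    simp only [Real.norm_eq_abs]
    have h1 := abs_psiR_le d hd ((V' j ω, V' k ω))
    have h2 : (0:ℝ) ≤ |(V' j ω).1| + 2*|(V' k ω).1| + 2*|(V' k ω).2| + d := by positivity
    rw [abs_of_nonneg h2]
    exact h1
  -- strong law for interarrival times
  have hval : ∫ ω, ((V' 1 ω).1 + (V' 1 ω).2) ∂μ = (∫ ω, X 0 ω ∂μ) + ∫ ω, I 0 ω ∂μ := by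
    rw [integral_add (hXint' 1) (hIint' 1)]
    congr 1
    · have h1 : ∫ ω, (V' 1 ω).1 ∂μ = ∫ ω, X 1 ω ∂μ := by
        apply integral_congr_ae
        filter_upwards [hVeq 1] with ω hω
        rw [← hω]
      rw [h1]
      exact ((hident 1).comp measurable_fst).integral_eq
    · have h1 : ∫ ω, (V' 1 ω).2 ∂μ = ∫ ω, I 1 ω ∂μ := by
        apply integral_congr_ae
        filter_upwards [hVeq 1] with ω hω
        rw [← hω]
      rw [h1]
      exact ((hident 1).comp measurable_snd).integral_eq
  have hSA : ∀ᵐ ω ∂μ, Tendsto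
      (fun n : ℕ => (∑ i ∈ Finset.range n, ((V' (i+1) ω).1 + (V' (i+1) ω).2)) / n)
      atTop (nhds ((∫ ω, X 0 ω ∂μ) + ∫ ω, I 0 ω ∂μ)) := by
    rw [← hval]
    apply strong_law_ae_real (fun i ω => ((V' (i+1) ω).1 + (V' (i+1) ω).2))
    · exact (hXint' 1).add (hIint' 1)
    · intro i j hij
      exact ((hindep'.indepFun (show i+1 ≠ j+1 by omega)).comp
        (measurable_fst.add measurable_snd) (measurable_fst.add measurable_snd))
    · intro i
      exact (hident1' (i+1)).comp (measurable_fst.add measurable_snd)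
  -- strong law for odd rewards
  set L : ℝ := ∫ ω, psiR d (V' 0 ω, V' 1 ω) ∂μ with hL
  have hOdd : ∀ᵐ ω ∂μ, Tendsto
      (fun n : ℕ => (∑ i ∈ Finset.range n, psiR d (V' (2*i) ω, V' (2*i+1) ω)) / n)
      atTop (nhds L) := by
    have h0 : (∫ ω, psiR d (V' (2*0) ω, V' (2*0+1) ω) ∂μ) = L := by norm_num; rfl
    rw [← h0]
    apply strong_law_ae_real (fun i ω => psiR d (V' (2*i) ω, V' (2*i+1) ω))
    · have := hgint 0 1
      simpa using this
    · intro i j hij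
      exact ((hindep'.indepFun_prodMk_prodMk hVmeas (2*i) (2*i+1) (2*j) (2*j+1)
        (by omega) (by omega) (by omega) (by omega)).comp (psiR_meas d) (psiR_meas d))
    · intro i
      exact ((hpair (2*i) (2*i+1) (by omega)).trans (hpair (2*0) (2*0+1) (by omega)).symm).comp
        (psiR_meas d)
  -- strong law for even rewards
  have hEven : ∀ᵐ ω ∂μ, Tendsto
      (fun n : ℕ => (∑ i ∈ Finset.range n, psiR d (V' (2*i+1) ω, V' (2*i+2) ω)) / n)
      atTop (nhds L) := by
    have h0 : (∫ ω, psiR d (V' (2*0+1) ω, V' (2*0+2) ω) ∂μ) = L := by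
      rw [hL]
      exact ((hpair 1 2 (by omega)).comp (psiR_meas d)).integral_eq
    rw [← h0]
    apply strong_law_ae_real (fun i ω => psiR d (V' (2*i+1) ω, V' (2*i+2) ω))
    · have := hgint 1 2
      simpa using this
    · intro i j hij
      exact ((hindep'.indepFun_prodMk_prodMk hVmeas (2*i+1) (2*i+2) (2*j+1) (2*j+2)
        (by omega) (by omega) (by omega) (by omega)).comp (psiR_meas d) (psiR_meas d))
    · intro i
      exact ((hpair (2*i+1) (2*i+2) (by omega)).trans
        (hpair (2*0+1) (2*0+2) (by omega)).symm).comp (psiR_meas d)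
  -- the target integral equals L
  have hLeq : (∫ ω, min (max (X 0 ω + I 1 ω + X 1 ω - d) 0) (X 1 ω + I 1 ω) ∂μ) = L := by
    rw [hL]
    apply integral_congr_ae
    filter_upwards [hVeq 0, hVeq 1] with ω h0 h1
    unfold psiR
    rw [← h0, ← h1]
  rw [hLeq]
  -- combine a.e.
  have hVeqall : ∀ᵐ ω ∂μ, ∀ k, (X k ω, I k ω) = V' k ω := by
    rw [ae_all_iff]
    exact hVeq
  filter_upwards [hVeqall, hSA, hOdd, hEven] with ω hVω hSω hAω hBω
  have hXv : ∀ k, X k ω = (V' k ω).1 := fun k => by rw [← hVω k]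
  have hIv : ∀ k, I k ω = (V' k ω).2 := fun k => by rw [← hVω k]
  -- reward sum convergence
  have hc : Tendsto (fun n : ℕ => (∑ k ∈ Finset.Icc 1 n,
      min (max (X (k-1) ω + I k ω + X k ω - d) 0) (X k ω + I k ω)) / n) atTop (nhds L) := by
    apply evenodd_tendsto (fun i => psiR d (V' (2*i) ω, V' (2*i+1) ω))
      (fun i => psiR d (V' (2*i+1) ω, V' (2*i+2) ω)) _ L ?_ ?_ hAω hBω
    · intro n
      unfold psiR
      rw [show 2*n+1-1 = 2*n from by omega, hXv (2*n), hXv (2*n+1), hIv (2*n+1)]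
    · intro n
      unfold psiR
      rw [show 2*n+2-1 = 2*n+1 from by omega, hXv (2*n+1), hXv (2*n+2), hIv (2*n+2)]
  -- interarrival sum convergence
  have hs : Tendsto (fun n : ℕ => (∑ j ∈ Finset.Icc 1 n, (X j ω + I j ω)) / n) atTop
      (nhds ((∫ ω, X 0 ω ∂μ) + ∫ ω, I 0 ω ∂μ)) := by
    refine hSω.congr fun n => ?_
    congr 1
    rw [sum_Icc_one]
    apply Finset.sum_congr rfl
    intro i _
    rw [hXv (i+1), hIv (i+1)]
  have hmono : Monotone (fun n : ℕ => ∑ j ∈ Finset.Icc 1 n, (X j ω + I j ω)) := by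
    intro a b hab
    apply Finset.sum_le_sum_of_subset_of_nonneg (Finset.Icc_subset_Icc_right hab)
    intro i _ _
    have := hXnonneg i ω
    have := hInonneg i ω
    linarith
  exact renewal_det_s6 (fun n => ∑ j ∈ Finset.Icc 1 n, (X j ω + I j ω))
    (fun n => ∑ k ∈ Finset.Icc 1 n,
      min (max (X (k-1) ω + I k ω + X k ω - d) 0) (X k ω + I k ω))
    _ L hmean hmono hs hc
end

section
/- Let λ > 0, μ > 0, and d ≥ 1/λ. Then ∫_0^∞ ∫_0^∞ min{ (x + ⌈λx'⌉/λ − d)^+ , x + ⌈λx'⌉/λ − x' } · μ e^{−μx} · μ e^{−μx'} dx dx' = e^{−μ⌈λd⌉/λ} / (λ(1 − e^{−μ/λ})) + e^{−μ⌊λd⌋/λ} (⌈λd⌉/λ − d + 1/μ) + (e^{−μd}/μ) ((e^{μ/λ} − 1)⌊λd⌋ − 1). -/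
open MeasureTheory Real Set Filter

variable {mu : ℝ}

lemma expInt_Ioi (hmu : 0 < mu) (a : ℝ) :
    ∫ x in Ioi a, mu * exp (-(mu * x)) = exp (-(mu * a)) := by
  have h := integral_Ioi_of_hasDerivAt_of_nonneg (g := fun x => -exp (-(mu * x)))
    (g' := fun x => mu * exp (-(mu * x))) (a := a) (l := 0)
    ?_ ?_ ?_ ?_
  · simpa using h
  · exact (Continuous.continuousWithinAt (by continuity))
  · intro x _
    have : HasDerivAt (fun x : ℝ => -(mu * x)) (-mu) x := by
      simpa [Pi.neg_def] using ((hasDerivAt_id x).const_mul mu).neg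
    have := (this.exp).neg
    simpa [mul_comm, Pi.neg_def] using this
  · intro x _; positivity
  · have : Tendsto (fun x : ℝ => -(mu * x)) atTop atBot := by
      exact tendsto_neg_atBot_iff.mpr (tendsto_id.const_mul_atTop hmu)
    simpa using (Real.tendsto_exp_atBot.comp this).neg

lemma expInt_Ioi_integrable (hmu : 0 < mu) (a : ℝ) :
    IntegrableOn (fun x => mu * exp (-(mu * x))) (Ioi a) := by
  apply integrableOn_Ioi_deriv_of_nonneg (g := fun x => -exp (-(mu * x))) (l := 0)
    (Continuous.continuousWithinAt (by continuity))
  · intro x _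
    have : HasDerivAt (fun x : ℝ => -(mu * x)) (-mu) x := by
      simpa [Pi.neg_def] using ((hasDerivAt_id x).const_mul mu).neg
    have := (this.exp).neg
    simpa [mul_comm, Pi.neg_def] using this
  · intro x _; positivity
  · have : Tendsto (fun x : ℝ => -(mu * x)) atTop atBot :=
      tendsto_neg_atBot_iff.mpr (tendsto_id.const_mul_atTop hmu)
    simpa using (Real.tendsto_exp_atBot.comp this).neg

lemma expDeriv (hmu : 0 < mu) (x : ℝ) :
    HasDerivAt (fun x : ℝ => -exp (-(mu * x))) (mu * exp (-(mu * x))) x := by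
  have : HasDerivAt (fun x : ℝ => -(mu * x)) (-mu) x := by
    simpa [Pi.neg_def] using ((hasDerivAt_id x).const_mul mu).neg
  have := (this.exp).neg
  simpa [mul_comm, Pi.neg_def] using this

lemma expTendsto (hmu : 0 < mu) :
    Tendsto (fun x : ℝ => exp (-(mu * x))) atTop (nhds 0) := by
  have : Tendsto (fun x : ℝ => -(mu * x)) atTop atBot :=
    tendsto_neg_atBot_iff.mpr (tendsto_id.const_mul_atTop hmu)
  exact Real.tendsto_exp_atBot.comp this

lemma xexpDeriv (hmu : 0 < mu) (x : ℝ) :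
    HasDerivAt (fun x : ℝ => -(x + 1/mu) * exp (-(mu * x))) (x * (mu * exp (-(mu * x)))) x := by
  have h1 : HasDerivAt (fun x : ℝ => -(x + 1/mu)) (-1) x := by
    exact ((hasDerivAt_id x).add_const (1/mu)).neg
  have h2 : HasDerivAt (fun x : ℝ => exp (-(mu * x))) (-mu * exp (-(mu * x))) x := by
    have : HasDerivAt (fun x : ℝ => -(mu * x)) (-mu) x := by
      simpa [Pi.neg_def] using ((hasDerivAt_id x).const_mul mu).neg
    simpa [mul_comm] using this.exp
  have := h1.mul h2
  refine this.congr_deriv ?_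
  field_simp [hmu.ne']
  ring

lemma xexpTendsto (hmu : 0 < mu) :
    Tendsto (fun x : ℝ => -(x + 1/mu) * exp (-(mu * x))) atTop (nhds 0) := by
  have key : Tendsto (fun y : ℝ => -((y/mu + 1/mu) * exp (-y))) atTop (nhds 0) := by
    have h1 : Tendsto (fun y : ℝ => y * exp (-y)) atTop (nhds 0) := by
      simpa using Real.tendsto_pow_mul_exp_neg_atTop_nhds_zero 1
    have h0 : Tendsto (fun y : ℝ => exp (-y)) atTop (nhds 0) := by
      simpa using expTendsto (mu := 1) one_pos
    have := ((h1.const_mul (1/mu)).add (h0.const_mul (1/mu))).neg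
    simp only [mul_zero, add_zero, neg_zero, zero_mul] at this
    convert this using 2 with y
    ring
  have hcomp : Tendsto (fun x : ℝ => mu * x) atTop atTop := tendsto_id.const_mul_atTop hmu
  have := key.comp hcomp
  convert this using 2 with x
  simp only [Function.comp]
  rw [mul_comm mu x, mul_div_assoc, div_self (ne_of_gt hmu)]
  ring_nf

lemma xexpInt_Ioi (hmu : 0 < mu) {a : ℝ} (ha : 0 ≤ a) :
    ∫ x in Ioi a, x * (mu * exp (-(mu * x))) = (a + 1/mu) * exp (-(mu * a)) := by
  have h := integral_Ioi_of_hasDerivAt_of_nonneg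
    (g := fun x => -(x + 1/mu) * exp (-(mu * x)))
    (g' := fun x => x * (mu * exp (-(mu * x)))) (a := a) (l := 0)
    (Continuous.continuousWithinAt (by continuity))
    (fun x _ => xexpDeriv hmu x)
    (fun x hx => by
      have : (0:ℝ) < x := lt_of_le_of_lt ha hx
      positivity)
    (xexpTendsto hmu)
  rw [h]; ring

lemma xexpInt_Ioi_integrable (hmu : 0 < mu) {a : ℝ} (ha : 0 ≤ a) :
    IntegrableOn (fun x => x * (mu * exp (-(mu * x)))) (Ioi a) := by
  exact integrableOn_Ioi_deriv_of_nonneg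
    (Continuous.continuousWithinAt (by continuity))
    (fun x _ => xexpDeriv hmu x)
    (fun x hx => by
      have : (0:ℝ) < x := lt_of_le_of_lt ha hx
      positivity)
    (xexpTendsto hmu)

lemma expInt_interval (hmu : 0 < mu) (a b : ℝ) :
    ∫ x in a..b, mu * exp (-(mu * x)) = exp (-(mu * a)) - exp (-(mu * b)) := by
  have := intervalIntegral.integral_eq_sub_of_hasDerivAt
    (f := fun x => -exp (-(mu * x))) (f' := fun x => mu * exp (-(mu * x)))
    (a := a) (b := b) (fun x _ => expDeriv hmu x)
    ((Continuous.intervalIntegrable (by continuity)) a b)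
  rw [this]; ring

lemma maxInt (hmu : 0 < mu) {a : ℝ} (ha : 0 ≤ a) :
    ∫ x in Ioi (0:ℝ), max (x - a) 0 * (mu * exp (-(mu * x))) = exp (-(mu * a)) / mu := by
  have hsplit : Ioc (0:ℝ) a ∪ Ioi a = Ioi (0:ℝ) := Ioc_union_Ioi_eq_Ioi ha
  have hzero : ∫ x in Ioc (0:ℝ) a, max (x - a) 0 * (mu * exp (-(mu * x))) = 0 := by
    rw [setIntegral_congr_fun measurableSet_Ioc (g := fun _ => 0)]
    · simp
    · intro x hx
      have : x - a ≤ 0 := by linarith [hx.2]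
      simp [max_eq_right this]
  have heq : EqOn (fun x => max (x - a) 0 * (mu * exp (-(mu * x))))
      (fun x => x * (mu * exp (-(mu * x))) - a * (mu * exp (-(mu * x)))) (Ioi a) := by
    intro x hx
    have : (0:ℝ) ≤ x - a := by simp at hx; linarith
    simp only [max_eq_left this]; ring
  have hint2 : IntegrableOn (fun x => x * (mu * exp (-(mu * x))) - a * (mu * exp (-(mu * x)))) (Ioi a) :=
    (xexpInt_Ioi_integrable hmu ha).sub ((expInt_Ioi_integrable hmu a).const_mul a)
  have hIoi : ∫ x in Ioi a, max (x - a) 0 * (mu * exp (-(mu * x))) = exp (-(mu * a)) / mu := by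
    rw [setIntegral_congr_fun measurableSet_Ioi heq,
      integral_sub (xexpInt_Ioi_integrable hmu ha) ((expInt_Ioi_integrable hmu a).const_mul a)]
    rw [xexpInt_Ioi hmu ha]
    have : ∫ x in Ioi a, a * (mu * exp (-(mu * x))) = a * exp (-(mu * a)) := by
      rw [integral_const_mul, expInt_Ioi hmu]
    rw [this]
    field_simp
    ring
  have hIoc_int : IntegrableOn (fun x => max (x - a) 0 * (mu * exp (-(mu * x)))) (Ioc (0:ℝ) a) := by
    apply Continuous.integrableOn_Ioc
    exact ((continuous_id.sub continuous_const).max continuous_const).mul (by continuity)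
  have hIoi_int : IntegrableOn (fun x => max (x - a) 0 * (mu * exp (-(mu * x)))) (Ioi a) :=
    hint2.congr_fun (fun x hx => (heq hx).symm) measurableSet_Ioi
  rw [← hsplit, setIntegral_union (Ioc_disjoint_Ioi le_rfl) measurableSet_Ioi hIoc_int hIoi_int,
    hzero, hIoi, zero_add]

lemma shiftInt (hmu : 0 < mu) (b : ℝ) :
    ∫ x in Ioi (0:ℝ), (x + b) * (mu * exp (-(mu * x))) = 1/mu + b := by
  have heq : EqOn (fun x => (x + b) * (mu * exp (-(mu * x))))
      (fun x => x * (mu * exp (-(mu * x))) + b * (mu * exp (-(mu * x)))) (Ioi 0) := by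
    intro x _; simp only; ring
  rw [setIntegral_congr_fun measurableSet_Ioi heq,
    integral_add (xexpInt_Ioi_integrable hmu le_rfl) ((expInt_Ioi_integrable hmu 0).const_mul b),
    xexpInt_Ioi hmu le_rfl, integral_const_mul, expInt_Ioi hmu]
  simp

lemma inner_eval (hmu : 0 < mu) {lam : ℝ} (d : ℝ) (hlam : 0 < lam) {x' : ℝ} (hx' : 0 < x') :
    ∫ x in Ioi (0:ℝ),
        min (max (x + (⌈lam * x'⌉ : ℝ) / lam - d) 0) (x + (⌈lam * x'⌉ : ℝ) / lam - x') *
          (mu * exp (-(mu * x)))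
      = if (⌈lam * x'⌉ : ℝ) / lam ≤ d then exp (-(mu * (d - (⌈lam * x'⌉ : ℝ) / lam))) / mu
        else 1/mu + (⌈lam * x'⌉ : ℝ) / lam - max d x' := by
  set c : ℝ := (⌈lam * x'⌉ : ℝ) / lam with hc
  have hcx' : x' ≤ c := by
    rw [hc, le_div_iff₀ hlam, mul_comm]
    exact Int.le_ceil _
  split_ifs with h
  · have heq : EqOn (fun x => min (max (x + c - d) 0) (x + c - x') * (mu * exp (-(mu * x))))
        (fun x => max (x - (d - c)) 0 * (mu * exp (-(mu * x)))) (Ioi 0) := by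
      intro x hx
      simp only [mem_Ioi] at hx
      have h1 : x + c - d ≤ x + c - x' := by linarith
      have h2 : (0:ℝ) ≤ x + c - x' := by linarith
      simp only
      rw [min_eq_left (max_le h1 h2)]
      congr 2
      ring
    rw [setIntegral_congr_fun measurableSet_Ioi heq, maxInt hmu (by linarith)]
  · push_neg at h
    have heq : EqOn (fun x => min (max (x + c - d) 0) (x + c - x') * (mu * exp (-(mu * x))))
        (fun x => (x + (c - max d x')) * (mu * exp (-(mu * x)))) (Ioi 0) := by
      intro x hx
      simp only [mem_Ioi] at hx
      have hA : (0:ℝ) ≤ x + c - d := by linarith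
      simp only
      rw [max_eq_left hA]
      rcases le_total x' d with hcase | hcase
      · rw [max_eq_left hcase, min_eq_left (by linarith)]
        ring_nf
      · rw [max_eq_right hcase, min_eq_right (by linarith)]
        ring_nf
    rw [setIntegral_congr_fun measurableSet_Ioi heq, shiftInt hmu]
    ring

noncomputable def Gfun (lam mu d : ℝ) (x' : ℝ) : ℝ :=
  (if (⌈lam * x'⌉ : ℝ) / lam ≤ d then exp (-(mu * (d - (⌈lam * x'⌉ : ℝ) / lam))) / mu
   else 1/mu + (⌈lam * x'⌉ : ℝ) / lam - max d x') * (mu * exp (-(mu * x')))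

lemma ceil_measurable {lam : ℝ} (hlam : 0 < lam) :
    Measurable (fun x' : ℝ => (⌈lam * x'⌉ : ℝ)) := by
  apply Monotone.measurable
  intro x y hxy
  have : lam * x ≤ lam * y := by nlinarith
  simp only []
  exact_mod_cast Int.ceil_le_ceil this

lemma expInt_Ioc {mu : ℝ} (hmu : 0 < mu) {a b : ℝ} (hab : a ≤ b) :
    ∫ x in Ioc a b, mu * exp (-(mu * x)) = exp (-(mu * a)) - exp (-(mu * b)) := by
  rw [← intervalIntegral.integral_of_le hab, expInt_interval hmu]

lemma Gfun_measurable {lam mu d : ℝ} (hlam : 0 < lam) : Measurable (Gfun lam mu d) := by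
  unfold Gfun
  apply Measurable.mul
  · apply Measurable.ite
    · exact measurableSet_le ((ceil_measurable hlam).div_const lam) measurable_const
    · exact ((((ceil_measurable hlam).div_const lam).const_sub d).const_mul mu).neg.exp.div_const mu
    · exact (measurable_const.add ((ceil_measurable hlam).div_const lam)).sub
        (measurable_const.max measurable_id)
  · exact (((measurable_id.const_mul mu).neg).exp.const_mul mu)

lemma Gfun_nonneg {lam mu d : ℝ} (hlam : 0 < lam) (hmu : 0 < mu) {x' : ℝ} (hx' : 0 < x') :
    0 ≤ Gfun lam mu d x' := by
  unfold Gfun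
  have hcx' : x' ≤ (⌈lam * x'⌉ : ℝ) / lam := by
    rw [le_div_iff₀ hlam, mul_comm]; exact Int.le_ceil _
  apply mul_nonneg _ (by positivity)
  split_ifs with h
  · positivity
  · push_neg at h
    rcases max_cases d x' with ⟨he, _⟩ | ⟨he, _⟩ <;> rw [he]
    · nlinarith [one_div_pos.mpr hmu]
    · nlinarith [one_div_pos.mpr hmu]

lemma Gfun_le {lam mu d : ℝ} (hlam : 0 < lam) (hmu : 0 < mu) {x' : ℝ} (hx' : 0 < x') :
    Gfun lam mu d x' ≤ (1/mu + 1/lam) * (mu * exp (-(mu * x'))) + x' * (mu * exp (-(mu * x'))) := by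
  unfold Gfun
  have hcx' : x' ≤ (⌈lam * x'⌉ : ℝ) / lam := by
    rw [le_div_iff₀ hlam, mul_comm]; exact Int.le_ceil _
  have hub : (⌈lam * x'⌉ : ℝ) / lam ≤ x' + 1/lam := by
    rw [div_le_iff₀ hlam]
    have := Int.ceil_lt_add_one (lam * x')
    have hl : (x' + 1/lam) * lam = lam * x' + 1 := by field_simp
    linarith
  have hd0 : (0:ℝ) < mu * exp (-(mu * x')) := by positivity
  have key : (if (⌈lam * x'⌉ : ℝ) / lam ≤ d then exp (-(mu * (d - (⌈lam * x'⌉ : ℝ) / lam))) / mu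
      else 1/mu + (⌈lam * x'⌉ : ℝ) / lam - max d x') ≤ 1/mu + 1/lam + x' := by
    split_ifs with h
    · have : exp (-(mu * (d - (⌈lam * x'⌉ : ℝ) / lam))) ≤ 1 := by
        rw [exp_le_one_iff]
        nlinarith
      have h2 : exp (-(mu * (d - (⌈lam * x'⌉ : ℝ) / lam))) / mu ≤ 1/mu := by
        apply div_le_div_of_nonneg_right this hmu.le
      have hx'pos : (0:ℝ) < 1/lam := by positivity
      linarith
    · have : max d x' ≥ 0 := le_max_of_le_right hx'.le
      linarith
  nlinarith [key, hd0]

lemma majorant_integrable {mu : ℝ} (hmu : 0 < mu) {c : ℝ} {a : ℝ} (ha : 0 ≤ a) :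
    IntegrableOn (fun x' : ℝ => c * (mu * exp (-(mu * x'))) + x' * (mu * exp (-(mu * x')))) (Ioi a) :=
  ((expInt_Ioi_integrable hmu a).const_mul c).add (xexpInt_Ioi_integrable hmu ha)

lemma Gfun_integrableOn {lam mu d : ℝ} (hlam : 0 < lam) (hmu : 0 < mu) :
    IntegrableOn (Gfun lam mu d) (Ioi (0:ℝ)) := by
  apply Integrable.mono (majorant_integrable hmu (c := 1/mu + 1/lam) le_rfl)
    ((Gfun_measurable hlam).aestronglyMeasurable.restrict)
  rw [ae_restrict_iff' measurableSet_Ioi]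
  apply Filter.Eventually.of_forall
  intro x' hx'
  have hx' : 0 < x' := mem_Ioi.mp hx'
  rw [Real.norm_eq_abs, Real.norm_eq_abs, abs_of_nonneg (Gfun_nonneg hlam hmu hx')]
  have hb : 0 ≤ (1/mu + 1/lam) * (mu * exp (-(mu * x'))) + x' * (mu * exp (-(mu * x'))) := by
    positivity
  rw [abs_of_nonneg hb]
  exact Gfun_le hlam hmu hx'

lemma ceilPart_integrableOn {lam mu : ℝ} (hlam : 0 < lam) (hmu : 0 < mu) {a : ℝ} (ha : 0 ≤ a) :
    IntegrableOn (fun x' : ℝ => (⌈lam * x'⌉ : ℝ) / lam * (mu * exp (-(mu * x')))) (Ioi a) := by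
  apply Integrable.mono (majorant_integrable hmu (c := 1/lam) ha)
    ((((ceil_measurable hlam).div_const lam).mul
      ((measurable_id.const_mul mu).neg.exp.const_mul mu)).aestronglyMeasurable.restrict)
  rw [ae_restrict_iff' measurableSet_Ioi]
  apply Filter.Eventually.of_forall
  intro x' hx'
  have hx' : 0 < x' := lt_of_le_of_lt ha (mem_Ioi.mp hx')
  have hcx' : x' ≤ (⌈lam * x'⌉ : ℝ) / lam := by
    rw [le_div_iff₀ hlam, mul_comm]; exact Int.le_ceil _
  have hub : (⌈lam * x'⌉ : ℝ) / lam ≤ x' + 1/lam := by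
    rw [div_le_iff₀ hlam]
    have := Int.ceil_lt_add_one (lam * x')
    have hl : (x' + 1/lam) * lam = lam * x' + 1 := by field_simp
    linarith
  have hd0 : (0:ℝ) < mu * exp (-(mu * x')) := by positivity
  simp only [id_eq, Pi.mul_apply, Pi.neg_apply]
  rw [Real.norm_eq_abs, Real.norm_eq_abs, abs_of_nonneg (by positivity : (0:ℝ) ≤ (⌈lam * x'⌉ : ℝ) / lam * (mu * exp (-(mu * x'))))]
  have hb : 0 ≤ 1/lam * (mu * exp (-(mu * x'))) + x' * (mu * exp (-(mu * x'))) := by positivity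
  rw [abs_of_nonneg hb]
  nlinarith

lemma regionOne {lam mu d : ℝ} (hlam : 0 < lam) (hmu : 0 < mu) (hd : 1 / lam ≤ d) :
    ∫ x' in Ioc (0:ℝ) ((⌊lam * d⌋ : ℝ) / lam), Gfun lam mu d x'
      = (⌊lam * d⌋ : ℝ) * (exp (-(mu * d)) * (exp (mu/lam) - 1) / mu) := by
  have hld : 1 ≤ lam * d := by
    rw [div_le_iff₀ hlam] at hd; nlinarith
  have hn1 : 1 ≤ ⌊lam * d⌋ := Int.le_floor.mpr (by exact_mod_cast hld)
  set n : ℤ := ⌊lam * d⌋ with hn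
  set nn : ℕ := n.toNat with hnndef
  have hnn : (nn : ℝ) = (n : ℝ) := by exact_mod_cast Int.toNat_of_nonneg (by linarith)
  have hnld : (n : ℝ) ≤ lam * d := Int.floor_le _
  set a : ℕ → ℝ := fun k => (k : ℝ) / lam with ha
  have hale : ∀ k : ℕ, a k ≤ a (k+1) := by
    intro k
    simp only [ha]
    gcongr
    push_cast; linarith
  have hii : ∀ k : ℕ, IntervalIntegrable (Gfun lam mu d) volume (a k) (a (k+1)) := by
    intro k
    rw [intervalIntegrable_iff_integrableOn_Ioc_of_le (hale k)]
    apply (Gfun_integrableOn hlam hmu).mono_set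
    intro x hx
    have h0 : (0:ℝ) ≤ a k := by positivity
    exact mem_Ioi.mpr (lt_of_le_of_lt h0 hx.1)
  have hval : ∀ k : ℕ, k < nn →
      ∫ x' in a k..a (k+1), Gfun lam mu d x' = exp (-(mu * d)) * (exp (mu/lam) - 1) / mu := by
    intro k hk
    have hk1 : (k : ℝ) + 1 ≤ (n : ℝ) := by
      have : (k:ℤ) + 1 ≤ n := by omega
      exact_mod_cast this
    rw [intervalIntegral.integral_of_le (hale k)]
    have hcongr : EqOn (Gfun lam mu d)
        (fun x' => exp (-(mu * (d - ((k:ℝ)+1)/lam))) / mu * (mu * exp (-(mu * x'))))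
        (Ioc (a k) (a (k+1))) := by
      intro x' hx'
      have h1 : (k:ℝ) < lam * x' := by
        have := hx'.1
        rw [ha] at this
        simp only [div_lt_iff₀ hlam] at this  -- k/lam < x' → k < x'*lam
        nlinarith
      have h2 : lam * x' ≤ (k:ℝ) + 1 := by
        have := hx'.2
        rw [ha] at this
        simp only [le_div_iff₀ hlam] at this
        push_cast at this
        nlinarith
      have hceil : ⌈lam * x'⌉ = (k:ℤ) + 1 := by
        rw [Int.ceil_eq_iff]
        constructor <;> push_cast <;> linarith
      unfold Gfun
      rw [hceil]
      rw [if_pos (by push_cast; rw [div_le_iff₀ hlam]; nlinarith)]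
      push_cast
      ring_nf
    rw [setIntegral_congr_fun measurableSet_Ioc hcongr, integral_const_mul,
      expInt_Ioc hmu (hale k)]
    have e1 : exp (-(mu * (d - ((k:ℝ)+1)/lam))) * exp (-(mu * (a k))) =
        exp (-(mu * d)) * exp (mu/lam) := by
      rw [← exp_add, ← exp_add]; congr 1; rw [ha]; field_simp; ring
    have e2 : exp (-(mu * (d - ((k:ℝ)+1)/lam))) * exp (-(mu * (a (k+1)))) =
        exp (-(mu * d)) := by
      rw [← exp_add]; congr 1; rw [ha]; push_cast; field_simp; ring
    rw [div_mul_eq_mul_div, mul_sub, e1, e2]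
    ring
  have hsum := intervalIntegral.sum_integral_adjacent_intervals
      (f := Gfun lam mu d) (μ := volume) (a := a) (n := nn) (fun k _ => hii k)
  rw [Finset.sum_congr rfl (fun k hk => hval k (Finset.mem_range.mp hk))] at hsum
  rw [Finset.sum_const, Finset.card_range, nsmul_eq_mul] at hsum
  have ha0 : a 0 = 0 := by simp [ha]
  have hann : a nn = (n:ℝ)/lam := by
    show (nn:ℝ)/lam = (n:ℝ)/lam
    rw [hnn]
  rw [ha0, hann] at hsum
  rw [← intervalIntegral.integral_of_le (by positivity : (0:ℝ) ≤ (n:ℝ)/lam), ← hsum, hnn]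


lemma divle {a b c : ℝ} (h : a ≤ b) (hc : 0 < c) : a / c ≤ b / c :=
  (div_le_div_iff_of_pos_right hc).mpr h

lemma regionTwo {lam mu d : ℝ} (hlam : 0 < lam) (hmu : 0 < mu) (hd : 1 / lam ≤ d) :
    ∫ x' in Ioc ((⌊lam * d⌋ : ℝ) / lam) d, Gfun lam mu d x'
      = ((⌈lam * d⌉ : ℝ)/lam - d + 1/mu) *
        (exp (-(mu * ((⌊lam * d⌋ : ℝ) / lam))) - exp (-(mu * d))) := by
  have hnld : ((⌊lam * d⌋ : ℝ)) ≤ lam * d := Int.floor_le _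
  have hmd : (⌊lam * d⌋ : ℝ) / lam ≤ d := by rw [div_le_iff₀ hlam]; nlinarith
  rcases eq_or_lt_of_le hmd with heq | hlt
  · rw [heq]
    simp
  · have hnlt : (⌊lam * d⌋ : ℝ) < lam * d := by
      rw [div_lt_iff₀ hlam] at hlt
      nlinarith
    have hflt : lam * d < (⌊lam * d⌋ : ℝ) + 1 := Int.lt_floor_add_one _
    have hceild : ⌈lam * d⌉ = ⌊lam * d⌋ + 1 := by
      rw [Int.ceil_eq_iff]
      constructor <;> push_cast <;> linarith
    have hcg : EqOn (Gfun lam mu d)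
        (fun x' => (1/mu + ((⌊lam * d⌋ : ℝ) + 1)/lam - d) * (mu * exp (-(mu * x'))))
        (Ioc ((⌊lam * d⌋ : ℝ) / lam) d) := by
      intro x' hx'
      have h1 : (⌊lam * d⌋ : ℝ) < lam * x' := by
        have := hx'.1
        rw [div_lt_iff₀ hlam] at this
        nlinarith
      have h2 : lam * x' ≤ lam * d := by nlinarith [hx'.2]
      have hceil : ⌈lam * x'⌉ = ⌊lam * d⌋ + 1 := by
        rw [Int.ceil_eq_iff]
        constructor <;> push_cast <;> linarith
      unfold Gfun
      rw [hceil, if_neg (by push_cast; rw [div_le_iff₀ hlam]; nlinarith),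
        max_eq_left hx'.2]
      push_cast
      ring_nf
    rw [setIntegral_congr_fun measurableSet_Ioc hcg, integral_const_mul, expInt_Ioc hmu hmd]
    rw [hceild]
    push_cast
    ring

lemma ceilInt {lam mu d : ℝ} (hlam : 0 < lam) (hmu : 0 < mu) (hd0 : 0 < d) :
    ∫ x' in Ioi d, (⌈lam * x'⌉ : ℝ)/lam * (mu * exp (-(mu * x')))
      = ((⌈lam * d⌉ : ℝ)/lam) * exp (-(mu * d)) +
        exp (-(mu * ((⌈lam * d⌉ : ℝ)/lam))) / (lam * (1 - exp (-(mu/lam)))) := by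
  set N : ℤ := ⌈lam * d⌉ with hN
  set M : ℝ := (N : ℝ)/lam with hM
  have hldN : lam * d ≤ (N : ℝ) := Int.le_ceil _
  have hNlt : (N : ℝ) < lam * d + 1 := Int.ceil_lt_add_one _
  have hdM : d ≤ M := by rw [hM, le_div_iff₀ hlam]; nlinarith
  have hM0 : 0 < M := lt_of_lt_of_le hd0 hdM
  set q : ℝ := exp (-(mu/lam)) with hq
  have hq0 : 0 < q := exp_pos _
  have hq1 : q < 1 := by
    rw [hq, exp_lt_one_iff]
    have : 0 < mu/lam := by positivity
    linarith
  have h1q : 0 < 1 - q := by linarith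
  have hnq : ‖q‖ < 1 := by rwa [Real.norm_eq_abs, abs_of_nonneg hq0.le]
  have hsub : Ioc d M ∪ Ioi M = Ioi d := Ioc_union_Ioi_eq_Ioi hdM
  have hintA : IntegrableOn (fun x' : ℝ => (⌈lam * x'⌉ : ℝ)/lam * (mu * exp (-(mu * x')))) (Ioc d M) :=
    (ceilPart_integrableOn hlam hmu hd0.le).mono_set Ioc_subset_Ioi_self
  have hintB : IntegrableOn (fun x' : ℝ => (⌈lam * x'⌉ : ℝ)/lam * (mu * exp (-(mu * x')))) (Ioi M) :=
    ceilPart_integrableOn hlam hmu hM0.le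
  rw [← hsub, setIntegral_union (Ioc_disjoint_Ioi le_rfl) measurableSet_Ioi hintA hintB]
  have hA : ∫ x' in Ioc d M, (⌈lam * x'⌉ : ℝ)/lam * (mu * exp (-(mu * x')))
      = (N:ℝ)/lam * (exp (-(mu*d)) - exp (-(mu*M))) := by
    have hcg : EqOn (fun x' : ℝ => (⌈lam * x'⌉ : ℝ)/lam * (mu * exp (-(mu * x'))))
        (fun x' => (N:ℝ)/lam * (mu * exp (-(mu * x')))) (Ioc d M) := by
      intro x' hx'
      have h1 : lam * d < lam * x' := by nlinarith [hx'.1]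
      have h2 : lam * x' ≤ (N:ℝ) := by
        have := hx'.2
        rw [hM, le_div_iff₀ hlam] at this
        nlinarith
      have hceil : ⌈lam * x'⌉ = N := by
        rw [Int.ceil_eq_iff]
        constructor
        · push_cast; linarith
        · push_cast; linarith
      simp only [hceil]
    rw [setIntegral_congr_fun measurableSet_Ioc hcg, integral_const_mul, expInt_Ioc hmu hdM]
  rw [hA]
  have hBset : Ioi M = ⋃ k : ℕ, Ioc (((N:ℝ) + k)/lam) (((N:ℝ) + k + 1)/lam) := by
    ext x
    simp only [mem_Ioi, mem_iUnion, mem_Ioc]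
    constructor
    · intro hx
      have hlx : (N:ℝ) < lam * x := by
        rw [hM, div_lt_iff₀ hlam] at hx
        nlinarith
      have hcx : N + 1 ≤ ⌈lam * x⌉ := by
        have h : (N:ℝ) < (⌈lam * x⌉:ℝ) := lt_of_lt_of_le hlx (Int.le_ceil _)
        have : N < ⌈lam * x⌉ := by exact_mod_cast h
        omega
      have hcast : ((⌈lam * x⌉ - (N+1)).toNat : ℝ) = (⌈lam*x⌉:ℝ) - (N:ℝ) - 1 := by
        have h := Int.toNat_of_nonneg (show 0 ≤ ⌈lam*x⌉ - (N+1) by omega)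
        have h2 : (((⌈lam * x⌉ - (N+1)).toNat : ℤ) : ℝ) = ((⌈lam*x⌉ - (N+1) : ℤ) : ℝ) := by
          exact_mod_cast congrArg (Int.cast : ℤ → ℝ) h
        push_cast at h2
        push_cast
        linarith
      refine ⟨(⌈lam * x⌉ - (N+1)).toNat, ?_, ?_⟩
      · rw [div_lt_iff₀ hlam, hcast]
        have h2 : (⌈lam*x⌉:ℝ) - 1 < lam * x := by
          have := Int.ceil_lt_add_one (lam*x); linarith
        nlinarith
      · rw [le_div_iff₀ hlam, hcast]
        have h3 : lam * x ≤ (⌈lam*x⌉:ℝ) := Int.le_ceil _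
        nlinarith
    · rintro ⟨k, hk1, _⟩
      have hMk : M ≤ ((N:ℝ)+k)/lam := by
        rw [hM]
        exact divle (by have : (0:ℝ) ≤ (k:ℝ) := Nat.cast_nonneg k; linarith) hlam
      exact lt_of_le_of_lt hMk hk1
  have hdisj : Pairwise (Function.onFun Disjoint fun k : ℕ => Ioc (((N:ℝ)+k)/lam) (((N:ℝ)+k+1)/lam)) := by
    have key : ∀ i j : ℕ, i < j →
        Disjoint (Ioc (((N:ℝ)+i)/lam) (((N:ℝ)+i+1)/lam)) (Ioc (((N:ℝ)+j)/lam) (((N:ℝ)+j+1)/lam)) := by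
      intro i j hij
      rw [Set.disjoint_left]
      intro x hxi hxj
      have hij1 : (i:ℝ) + 1 ≤ (j:ℝ) := by exact_mod_cast hij
      have hle : ((N:ℝ)+i+1)/lam ≤ ((N:ℝ)+j)/lam :=
        divle (by linarith) hlam
      have := hxi.2
      have := hxj.1
      linarith
    intro i j hij
    rcases lt_or_gt_of_ne hij with h | h
    · exact key i j h
    · exact (key j i h).symm
  rw [hBset, integral_iUnion (fun k => measurableSet_Ioc) hdisj (by rw [← hBset]; exact hintB)]
  have hk : ∀ k : ℕ, ∫ x' in Ioc (((N:ℝ)+k)/lam) (((N:ℝ)+k+1)/lam),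
        (⌈lam * x'⌉:ℝ)/lam * (mu * exp (-(mu * x')))
      = (((N:ℝ)+1)/lam * (exp (-(mu*M)) * (1 - q))) * q^k
        + (1/lam * (exp (-(mu*M)) * (1 - q))) * ((k:ℝ) * q^k) := by
    intro k
    have hle : ((N:ℝ)+k)/lam ≤ ((N:ℝ)+k+1)/lam :=
      divle (by linarith) hlam
    have hcg : EqOn (fun x' : ℝ => (⌈lam * x'⌉ : ℝ)/lam * (mu * exp (-(mu * x'))))
        (fun x' => ((N:ℝ)+k+1)/lam * (mu * exp (-(mu * x'))))
        (Ioc (((N:ℝ)+k)/lam) (((N:ℝ)+k+1)/lam)) := by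
      intro x' hx'
      have h1 : (N:ℝ) + k < lam * x' := by
        have := hx'.1; rw [div_lt_iff₀ hlam] at this; nlinarith
      have h2 : lam * x' ≤ (N:ℝ) + k + 1 := by
        have := hx'.2; rw [le_div_iff₀ hlam] at this; nlinarith
      have hceil : ⌈lam * x'⌉ = N + k + 1 := by
        rw [Int.ceil_eq_iff]
        constructor <;> push_cast <;> linarith
      simp only [hceil]
      push_cast
      ring_nf
    rw [setIntegral_congr_fun measurableSet_Ioc hcg, integral_const_mul, expInt_Ioc hmu hle]
    have eq1 : exp (-(mu * (((N:ℝ)+k)/lam))) = exp (-(mu*M)) * q^k := by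
      rw [hq, ← exp_nat_mul, ← exp_add, hM]
      congr 1
      field_simp
      ring
    have eq2 : exp (-(mu * (((N:ℝ)+k+1)/lam))) = exp (-(mu*M)) * q^k * q := by
      rw [hq, ← exp_nat_mul, ← exp_add, ← exp_add, hM]
      congr 1
      field_simp
      ring
    rw [eq1, eq2]
    ring
  have S1 : Summable (fun k:ℕ => q^k) := summable_geometric_of_lt_one hq0.le hq1
  have S2 : Summable (fun k:ℕ => (k:ℝ) * q^k) := by
    simpa using summable_pow_mul_geometric_of_norm_lt_one 1 hnq
  rw [tsum_congr hk, Summable.tsum_add (S1.mul_left _) (S2.mul_left _), tsum_mul_left, tsum_mul_left,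
    tsum_geometric_of_lt_one hq0.le hq1, tsum_coe_mul_geometric_of_norm_lt_one hnq]
  rw [hM]
  field_simp
  ring

lemma regionThree {lam mu d : ℝ} (hlam : 0 < lam) (hmu : 0 < mu) (hd0 : 0 < d) :
    ∫ x' in Ioi d, Gfun lam mu d x'
      = exp (-(mu * ((⌈lam * d⌉ : ℝ)/lam))) / (lam * (1 - exp (-(mu/lam))))
        + ((⌈lam * d⌉ : ℝ)/lam) * exp (-(mu * d))
        + exp (-(mu * d))/mu - (d + 1/mu) * exp (-(mu * d)) := by
  have hcg : EqOn (Gfun lam mu d)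
      (fun x' => 1/mu * (mu * exp (-(mu * x')))
        + (⌈lam * x'⌉ : ℝ)/lam * (mu * exp (-(mu * x')))
        - x' * (mu * exp (-(mu * x')))) (Ioi d) := by
    intro x' hx'
    have hdx : d < x' := mem_Ioi.mp hx'
    have hcx' : x' ≤ (⌈lam * x'⌉ : ℝ) / lam := by
      rw [le_div_iff₀ hlam, mul_comm]; exact Int.le_ceil _
    unfold Gfun
    rw [if_neg (by push_neg; linarith), max_eq_right hdx.le]
    ring
  have hI1 : IntegrableOn (fun x' : ℝ => 1/mu * (mu * exp (-(mu * x')))) (Ioi d) :=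
    (expInt_Ioi_integrable hmu d).const_mul _
  have hI2 : IntegrableOn (fun x' : ℝ => (⌈lam * x'⌉ : ℝ)/lam * (mu * exp (-(mu * x')))) (Ioi d) :=
    ceilPart_integrableOn hlam hmu hd0.le
  have hI3 : IntegrableOn (fun x' : ℝ => x' * (mu * exp (-(mu * x')))) (Ioi d) :=
    xexpInt_Ioi_integrable hmu hd0.le
  have hI12 : IntegrableOn (fun x' : ℝ => 1/mu * (mu * exp (-(mu * x')))
      + (⌈lam * x'⌉ : ℝ)/lam * (mu * exp (-(mu * x')))) (Ioi d) := by exact hI1.add hI2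
  rw [setIntegral_congr_fun measurableSet_Ioi hcg, integral_sub hI12 hI3,
    integral_add hI1 hI2, integral_const_mul, expInt_Ioi hmu, xexpInt_Ioi hmu hd0.le,
    ceilInt hlam hmu hd0]
  ring

/-- Corollary 2 (D/M/1/1): with deterministic inter-arrival time `1/λ`, i.i.d. exponential
service times `x' = X_{k-1}`, `x = X_k` of rate `μ`, and idle time `⌈λx'⌉/λ - x'`, the
expectation `E[g(k)]` equals the stated closed form. -/
theorem stmt9 (lam mu d : ℝ) (hlam : 0 < lam) (hmu : 0 < mu) (hd : 1 / lam ≤ d) :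
    (∫ x' in Ioi (0 : ℝ), ∫ x in Ioi (0 : ℝ),
        min (max (x + (⌈lam * x'⌉ : ℝ) / lam - d) 0) (x + (⌈lam * x'⌉ : ℝ) / lam - x') *
          (mu * exp (-(mu * x))) * (mu * exp (-(mu * x')))) =
      exp (-(mu * ((⌈lam * d⌉ : ℝ) / lam))) / (lam * (1 - exp (-(mu / lam)))) +
        exp (-(mu * ((⌊lam * d⌋ : ℝ) / lam))) * ((⌈lam * d⌉ : ℝ) / lam - d + 1 / mu) +
        (exp (-(mu * d)) / mu) * ((exp (mu / lam) - 1) * (⌊lam * d⌋ : ℝ) - 1) := by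
  have hld : 1 ≤ lam * d := by rw [div_le_iff₀ hlam] at hd; nlinarith
  have hd0 : 0 < d := by nlinarith
  have hkey : (∫ x' in Ioi (0 : ℝ), ∫ x in Ioi (0 : ℝ),
        min (max (x + (⌈lam * x'⌉ : ℝ) / lam - d) 0) (x + (⌈lam * x'⌉ : ℝ) / lam - x') *
          (mu * exp (-(mu * x))) * (mu * exp (-(mu * x'))))
      = ∫ x' in Ioi (0 : ℝ), Gfun lam mu d x' := by
    apply setIntegral_congr_fun measurableSet_Ioi
    intro x' hx'
    simp only []
    rw [integral_mul_const, inner_eval hmu d hlam (mem_Ioi.mp hx')]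
    rfl
  rw [hkey]
  have hnld : (⌊lam * d⌋ : ℝ) ≤ lam * d := Int.floor_le _
  have hn1 : (1:ℝ) ≤ (⌊lam * d⌋ : ℝ) := by
    exact_mod_cast Int.le_floor.mpr (by exact_mod_cast hld)
  have hm0 : 0 < (⌊lam * d⌋ : ℝ) / lam := div_pos (by linarith) hlam
  have hmd : (⌊lam * d⌋ : ℝ) / lam ≤ d := by rw [div_le_iff₀ hlam]; nlinarith
  have hsplit1 : Ioc (0:ℝ) ((⌊lam * d⌋ : ℝ) / lam) ∪ Ioi ((⌊lam * d⌋ : ℝ) / lam) = Ioi (0:ℝ) :=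
    Ioc_union_Ioi_eq_Ioi hm0.le
  have hsplit2 : Ioc ((⌊lam * d⌋ : ℝ) / lam) d ∪ Ioi d = Ioi ((⌊lam * d⌋ : ℝ) / lam) :=
    Ioc_union_Ioi_eq_Ioi hmd
  have hGint := Gfun_integrableOn (d := d) hlam hmu
  have h1 : IntegrableOn (Gfun lam mu d) (Ioc (0:ℝ) ((⌊lam * d⌋ : ℝ) / lam)) :=
    hGint.mono_set Ioc_subset_Ioi_self
  have h2 : IntegrableOn (Gfun lam mu d) (Ioi ((⌊lam * d⌋ : ℝ) / lam)) :=
    hGint.mono_set (Ioi_subset_Ioi hm0.le)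
  have h3 : IntegrableOn (Gfun lam mu d) (Ioc ((⌊lam * d⌋ : ℝ) / lam) d) :=
    h2.mono_set Ioc_subset_Ioi_self
  have h4 : IntegrableOn (Gfun lam mu d) (Ioi d) :=
    hGint.mono_set (Ioi_subset_Ioi hd0.le)
  rw [← hsplit1, setIntegral_union (Ioc_disjoint_Ioi le_rfl) measurableSet_Ioi h1 h2,
    ← hsplit2, setIntegral_union (Ioc_disjoint_Ioi le_rfl) measurableSet_Ioi h3 h4,
    regionOne hlam hmu hd, regionTwo hlam hmu hd, regionThree hlam hmu hd0]
  ring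
end

section
/- Let λ > 0 and μ > 0 with λ ≠ μ, and let d ≥ 0. Let X, X', I be mutually independent random variables where X and X' are exponentially distributed with rate μ and I is exponentially distributed with rate λ. Then E[ min{(X' + I + X − d)^+, X + I} ] = μ²(e^{−λd} − e^{−μd}) / (λ(μ − λ)²) + e^{−μd} (1/λ + 1/μ − λd/(μ − λ)). -/
open MeasureTheory ProbabilityTheory Real Set Filter
open scoped ENNReal NNReal

namespace Cor3Aux

/-! ### Basic limits -/

lemma tendsto_exp_neg' {b : ℝ} (hb : 0 < b) :
    Tendsto (fun x : ℝ => exp (-(b * x))) atTop (nhds 0) := by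
  have h1 : Tendsto (fun x : ℝ => b * x) atTop atTop := tendsto_id.const_mul_atTop hb
  exact Real.tendsto_exp_atBot.comp (tendsto_neg_atTop_atBot.comp h1)

lemma tendsto_mul_exp_neg' {b : ℝ} (hb : 0 < b) :
    Tendsto (fun x : ℝ => x * exp (-(b * x))) atTop (nhds 0) := by
  have h1 : Tendsto (fun x : ℝ => b * x) atTop atTop := tendsto_id.const_mul_atTop hb
  have h2 := (tendsto_pow_mul_exp_neg_atTop_nhds_zero 1).comp h1
  have h3 := h2.const_mul (1 / b)
  rw [mul_zero] at h3
  refine h3.congr fun x => ?_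
  simp only [Function.comp, pow_one]
  field_simp

/-! ### Derivatives of antiderivatives -/

lemma hasDerivAt_exp_neg (b x : ℝ) (hb : b ≠ 0) :
    HasDerivAt (fun y : ℝ => -exp (-(b * y)) / b) (exp (-(b * x))) x := by
  have h1 : HasDerivAt (fun y : ℝ => -(b * y)) (-b) x := by
    simpa using (hasDerivAt_id x).const_mul (-b)
  have h3 := (h1.exp.neg).div_const b
  refine h3.congr_deriv ?_
  field_simp

lemma hasDerivAt_mul_exp_neg (b x : ℝ) (hb : b ≠ 0) :
    HasDerivAt (fun y : ℝ => -((y / b + 1 / b ^ 2) * exp (-(b * y)))) (x * exp (-(b * x))) x := by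
  have h1 : HasDerivAt (fun y : ℝ => y / b + 1 / b ^ 2) (1 / b) x :=
    ((hasDerivAt_id x).div_const b).add_const (1 / b ^ 2)
  have h2 : HasDerivAt (fun y : ℝ => -(b * y)) (-b) x := by
    simpa using (hasDerivAt_id x).const_mul (-b)
  have h3 := (h1.mul h2.exp).neg
  refine h3.congr_deriv ?_
  field_simp
  ring

/-! ### Explicit improper integrals -/

lemma integrableOn_exp_Ioi {b : ℝ} (hb : 0 < b) (c : ℝ) :
    IntegrableOn (fun x : ℝ => exp (-(b * x))) (Ioi c) := by
  simpa [neg_mul] using exp_neg_integrableOn_Ioi c hb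

lemma integral_exp_Ioi {b : ℝ} (hb : 0 < b) (c : ℝ) :
    ∫ x in Ioi c, exp (-(b * x)) = exp (-(b * c)) / b := by
  have htend : Tendsto (fun y : ℝ => -exp (-(b * y)) / b) atTop (nhds 0) := by
    simpa using ((tendsto_exp_neg' hb).neg).div_const b
  rw [integral_Ioi_of_hasDerivAt_of_nonneg' (fun x _ => hasDerivAt_exp_neg b x hb.ne')
    (fun x _ => (exp_pos _).le) htend]
  ring

lemma tendsto_anti2 {b : ℝ} (hb : 0 < b) :
    Tendsto (fun y : ℝ => -((y / b + 1 / b ^ 2) * exp (-(b * y)))) atTop (nhds 0) := by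
  have h1 := (tendsto_mul_exp_neg' hb).const_mul (1 / b)
  have h2 := (tendsto_exp_neg' hb).const_mul (1 / b ^ 2)
  have h3 := (h1.add h2).neg
  simp only [mul_zero, add_zero, neg_zero] at h3
  refine h3.congr fun y => ?_
  ring

lemma integrableOn_mul_exp_Ioi {b : ℝ} (hb : 0 < b) {c : ℝ} (hc : 0 ≤ c) :
    IntegrableOn (fun x : ℝ => x * exp (-(b * x))) (Ioi c) :=
  integrableOn_Ioi_deriv_of_nonneg' (fun x _ => hasDerivAt_mul_exp_neg b x hb.ne')
    (fun x hx => mul_nonneg (hc.trans (le_of_lt hx)) (exp_pos _).le) (tendsto_anti2 hb)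

lemma integral_mul_exp_Ioi {b : ℝ} (hb : 0 < b) {c : ℝ} (hc : 0 ≤ c) :
    ∫ x in Ioi c, x * exp (-(b * x)) = (c / b + 1 / b ^ 2) * exp (-(b * c)) := by
  rw [integral_Ioi_of_hasDerivAt_of_nonneg' (fun x _ => hasDerivAt_mul_exp_neg b x hb.ne')
    (fun x hx => mul_nonneg (hc.trans (le_of_lt hx)) (exp_pos _).le) (tendsto_anti2 hb)]
  ring

lemma integral_exp_Ioc {k : ℝ} (hk : k ≠ 0) {T : ℝ} (hT : 0 ≤ T) :
    ∫ x in Ioc 0 T, exp (k * x) = (exp (k * T) - 1) / k := by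
  rw [← intervalIntegral.integral_of_le hT]
  have hder : ∀ x ∈ uIcc (0 : ℝ) T, HasDerivAt (fun y => exp (k * y) / k) (exp (k * x)) x := by
    intro x _
    have h1 : HasDerivAt (fun y : ℝ => k * y) k x := by
      simpa using (hasDerivAt_id x).const_mul k
    have h2 := h1.exp.div_const k
    refine h2.congr_deriv ?_
    field_simp
  rw [intervalIntegral.integral_eq_sub_of_hasDerivAt hder
    ((Real.continuous_exp.comp (continuous_const.mul continuous_id)).intervalIntegrable _ _)]
  simp only [mul_zero, exp_zero]
  ring

/-! ### Integrals against the exponential measure -/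

lemma expPDFReal_eq (r x : ℝ) :
    exponentialPDFReal r x = if 0 ≤ x then r * exp (-(r * x)) else 0 := by
  rw [exponentialPDFReal, gammaPDFReal]
  simp only [rpow_one, Real.Gamma_one, div_one, sub_self, rpow_zero, mul_one]

lemma expMeasure_eq (r : ℝ) :
    expMeasure r = volume.withDensity (fun x => ((exponentialPDFReal r x).toNNReal : ℝ≥0∞)) :=
  rfl

lemma ae_eq_indicator {r : ℝ} (hr : 0 < r) (f : ℝ → ℝ) :
    (fun x => (exponentialPDFReal r x).toNNReal • f x) =ᵐ[volume]
      (Ioi (0 : ℝ)).indicator (fun x => (r * exp (-(r * x))) * f x) := by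
  have h0 : ∀ᵐ x : ℝ, x ≠ 0 := by
    have : {x : ℝ | ¬ x ≠ 0} = {0} := by ext x; simp
    rw [ae_iff, this]
    exact Real.volume_singleton
  filter_upwards [h0] with x hx
  rcases lt_or_gt_of_ne hx with hneg | hpos
  · have hmem : x ∉ Ioi (0 : ℝ) := by simp only [mem_Ioi]; linarith
    rw [indicator_of_notMem hmem, expPDFReal_eq, if_neg (not_le.mpr hneg)]
    simp
  · rw [indicator_of_mem (mem_Ioi.mpr hpos), expPDFReal_eq, if_pos hpos.le, NNReal.smul_def,
      Real.coe_toNNReal _ (by positivity), smul_eq_mul]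

lemma integral_expMeasure {r : ℝ} (hr : 0 < r) (f : ℝ → ℝ) :
    ∫ x, f x ∂expMeasure r = ∫ x in Ioi 0, (r * exp (-(r * x))) * f x := by
  rw [expMeasure_eq, integral_withDensity_eq_integral_smul
    ((measurable_exponentialPDFReal r).real_toNNReal) f,
    integral_congr_ae (ae_eq_indicator hr f), integral_indicator measurableSet_Ioi]

lemma integrable_expMeasure {r : ℝ} (hr : 0 < r) {f : ℝ → ℝ}
    (h : IntegrableOn (fun x => (r * exp (-(r * x))) * f x) (Ioi 0)) :
    Integrable f (expMeasure r) := by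
  rw [expMeasure_eq, integrable_withDensity_iff_integrable_smul
    ((measurable_exponentialPDFReal r).real_toNNReal)]
  exact ((integrable_indicator_iff measurableSet_Ioi).mpr h).congr (ae_eq_indicator hr f).symm

lemma integrable_abs_expMeasure {r : ℝ} (hr : 0 < r) :
    Integrable (fun x : ℝ => |x|) (expMeasure r) := by
  apply integrable_expMeasure hr
  refine IntegrableOn.congr_fun ((integrableOn_mul_exp_Ioi hr le_rfl).const_mul r) ?_
    measurableSet_Ioi
  intro x hx
  show r * (x * exp (-(r * x))) = (r * exp (-(r * x))) * |x|
  rw [abs_of_pos (mem_Ioi.mp hx)]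
  ring

/-! ### Integrability on products -/

lemma integrable_comp_fst {α β : Type*} [MeasurableSpace α] [MeasurableSpace β]
    {μ : Measure α} {ν : Measure β} [IsProbabilityMeasure μ] [IsProbabilityMeasure ν]
    {f : α → ℝ} (hf : Integrable f μ) :
    Integrable (fun p : α × β => f p.1) (μ.prod ν) := by
  have h1 : (μ.prod ν).map Prod.fst = μ := by
    rw [Measure.map_fst_prod]; simp
  have h2 : Integrable f ((μ.prod ν).map Prod.fst) := h1.symm ▸ hf
  exact (integrable_map_measure (h1.symm ▸ hf.aestronglyMeasurable)
    measurable_fst.aemeasurable).mp h2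

lemma integrable_comp_snd {α β : Type*} [MeasurableSpace α] [MeasurableSpace β]
    {μ : Measure α} {ν : Measure β} [IsProbabilityMeasure μ] [IsProbabilityMeasure ν]
    {f : β → ℝ} (hf : Integrable f ν) :
    Integrable (fun p : α × β => f p.2) (μ.prod ν) := by
  have h1 : (μ.prod ν).map Prod.snd = ν := by
    rw [Measure.map_snd_prod]; simp
  have h2 : Integrable f ((μ.prod ν).map Prod.snd) := h1.symm ▸ hf
  exact (integrable_map_measure (h1.symm ▸ hf.aestronglyMeasurable)
    measurable_snd.aemeasurable).mp h2

lemma integrable_abs_prod {μ ν : Measure ℝ} [IsProbabilityMeasure μ] [IsProbabilityMeasure ν]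
    (hμ : Integrable (fun x : ℝ => |x|) μ) (hν : Integrable (fun x : ℝ => |x|) ν) :
    Integrable (fun p : ℝ × ℝ => |p.1| + |p.2|) (μ.prod ν) :=
  (integrable_comp_fst hμ).add (integrable_comp_snd hν)

lemma min_max_bound (a x i : ℝ) : ‖min (max a 0) (x + i)‖ ≤ |x| + |i| := by
  rw [Real.norm_eq_abs, abs_le]
  constructor
  · refine le_min (le_trans ?_ (le_max_right a 0)) ?_
    · have := abs_nonneg x; have := abs_nonneg i; linarith
    · have := neg_abs_le x; have := neg_abs_le i; linarith
  · refine (min_le_right _ _).trans ?_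
    have := le_abs_self x; have := le_abs_self i; linarith

/-! ### One-dimensional computations -/

lemma mean_shift_integrableOn {r : ℝ} (hr : 0 < r) (a : ℝ) :
    IntegrableOn (fun i : ℝ => (r * exp (-(r * i))) * (a + i)) (Ioi 0) := by
  have h : ∀ i : ℝ, (r * exp (-(r * i))) * (a + i)
      = (r * a) * exp (-(r * i)) + r * (i * exp (-(r * i))) := fun i => by ring
  simp only [h]
  exact ((integrableOn_exp_Ioi hr 0).const_mul _).add
    ((integrableOn_mul_exp_Ioi hr le_rfl).const_mul r)

lemma mean_shift {r : ℝ} (hr : 0 < r) (a : ℝ) :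
    ∫ i in Ioi 0, (r * exp (-(r * i))) * (a + i) = a + 1 / r := by
  have h : ∀ i : ℝ, (r * exp (-(r * i))) * (a + i)
      = (r * a) * exp (-(r * i)) + r * (i * exp (-(r * i))) := fun i => by ring
  simp only [h]
  rw [integral_add ((integrableOn_exp_Ioi hr 0).const_mul _)
    ((integrableOn_mul_exp_Ioi hr le_rfl).const_mul r),
    integral_const_mul, integral_const_mul, integral_exp_Ioi hr 0,
    integral_mul_exp_Ioi hr le_rfl]
  simp only [mul_zero, neg_zero, exp_zero, zero_div]
  field_simp
  ring

lemma K_integrableOn {r : ℝ} (hr : 0 < r) (s : ℝ) :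
    IntegrableOn (fun i : ℝ => (r * exp (-(r * i))) * max (i - s) 0) (Ioi 0) := by
  refine (mean_shift_integrableOn hr |s|).mono' ?_ ?_
  · exact (Continuous.aestronglyMeasurable (by fun_prop))
  · refine (ae_restrict_iff' measurableSet_Ioi).mpr (ae_of_all _ fun i hi => ?_)
    have hi' : (0 : ℝ) < i := mem_Ioi.mp hi
    rw [Real.norm_eq_abs, abs_of_nonneg (by positivity)]
    refine mul_le_mul_of_nonneg_left ?_ (by positivity)
    refine max_le ?_ ?_
    · have := neg_abs_le s; linarith
    · have := abs_nonneg s; linarith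

lemma K_val {r : ℝ} (hr : 0 < r) (s : ℝ) :
    ∫ i in Ioi 0, (r * exp (-(r * i))) * max (i - s) 0 =
      if s ≤ 0 then 1 / r - s else exp (-(r * s)) / r := by
  split_ifs with hs
  · rw [setIntegral_congr_fun measurableSet_Ioi
      (g := fun i : ℝ => (r * exp (-(r * i))) * (-s + i)) ?_]
    · rw [mean_shift hr (-s)]; ring
    · intro i hi
      have hi' : (0 : ℝ) < i := mem_Ioi.mp hi
      have hmax : max (i - s) 0 = i - s := max_eq_left (by linarith)
      simp only [hmax]; ring
  · have hs' : 0 < s := not_le.mp hs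
    have key : EqOn (fun i : ℝ => (r * exp (-(r * i))) * max (i - s) 0)
        (fun i : ℝ => r * (i * exp (-(r * i))) + (-(r * s)) * exp (-(r * i))) (Ioi s) := by
      intro i hi
      have hi' : s < i := mem_Ioi.mp hi
      have hmax : max (i - s) 0 = i - s := max_eq_left (by linarith)
      simp only [hmax]; ring
    have hIoc : IntegrableOn (fun i : ℝ => (r * exp (-(r * i))) * max (i - s) 0) (Ioc 0 s) :=
      Continuous.integrableOn_Ioc (by fun_prop)
    have hIoi : IntegrableOn (fun i : ℝ => (r * exp (-(r * i))) * max (i - s) 0) (Ioi s) :=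
      IntegrableOn.congr_fun (((integrableOn_mul_exp_Ioi hr hs'.le).const_mul r).add
        ((integrableOn_exp_Ioi hr s).const_mul (-(r * s)))) key.symm measurableSet_Ioi
    rw [← Ioc_union_Ioi_eq_Ioi hs'.le,
      setIntegral_union (Ioc_disjoint_Ioi le_rfl) measurableSet_Ioi hIoc hIoi]
    have h0 : ∫ i in Ioc 0 s, (r * exp (-(r * i))) * max (i - s) 0 = 0 := by
      rw [setIntegral_congr_fun measurableSet_Ioc (g := fun _ : ℝ => (0 : ℝ)) ?_]
      · simp
      · intro i hi
        have hmax : max (i - s) 0 = 0 := max_eq_right (by linarith [hi.2])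
        simp only [hmax, mul_zero]
    rw [h0, zero_add, setIntegral_congr_fun measurableSet_Ioi key,
      integral_add ((integrableOn_mul_exp_Ioi hr hs'.le).const_mul r)
        ((integrableOn_exp_Ioi hr s).const_mul (-(r * s))),
      integral_const_mul, integral_const_mul, integral_mul_exp_Ioi hr hs'.le,
      integral_exp_Ioi hr s]
    field_simp
    ring

/-- The function `Φ(t) = E[(X + I − t)⁺]` for `t > 0`. -/
noncomputable def Phi (lam mu t : ℝ) : ℝ :=
  mu * (exp (-(mu * t)) - exp (-(lam * t))) / (lam * (lam - mu)) +
    exp (-(mu * t)) * (1 / lam + 1 / mu)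

lemma M_val {lam mu : ℝ} (hlam : 0 < lam) (hmu : 0 < mu) (hne : lam ≠ mu) {t : ℝ} (ht : 0 < t) :
    ∫ x in Ioi 0, (mu * exp (-(mu * x))) *
        (if t - x ≤ 0 then 1 / lam - (t - x) else exp (-(lam * (t - x))) / lam) =
      Phi lam mu t := by
  have hk : lam - mu ≠ 0 := sub_ne_zero.mpr hne
  have key1 : EqOn (fun x : ℝ => (mu * exp (-(mu * x))) *
        (if t - x ≤ 0 then 1 / lam - (t - x) else exp (-(lam * (t - x))) / lam))
      (fun x : ℝ => (mu / lam * exp (-(lam * t))) * exp ((lam - mu) * x)) (Ioc 0 t) := by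
    intro x hx
    rcases eq_or_lt_of_le hx.2 with rfl | hlt
    · have e1 : exp (-(mu * x)) = exp (-(lam * x)) * exp ((lam - mu) * x) := by
        rw [← exp_add]; congr 1; ring
      simp only [sub_self, if_pos le_rfl]
      linear_combination (mu / lam) * e1
    · have hcond : ¬ (t - x ≤ 0) := not_le.mpr (by linarith)
      simp only [if_neg hcond]
      have e1 : exp (-(mu * x)) * exp (-(lam * (t - x)))
          = exp (-(lam * t)) * exp ((lam - mu) * x) := by
        rw [← exp_add, ← exp_add]; congr 1; ring
      linear_combination (mu / lam) * e1
  have key2 : EqOn (fun x : ℝ => (mu * exp (-(mu * x))) *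
        (if t - x ≤ 0 then 1 / lam - (t - x) else exp (-(lam * (t - x))) / lam))
      (fun x : ℝ => mu * (x * exp (-(mu * x))) + (mu * (1 / lam - t)) * exp (-(mu * x)))
      (Ioi t) := by
    intro x hx
    have hx' : t < x := mem_Ioi.mp hx
    simp only [if_pos (by linarith : t - x ≤ 0)]
    ring
  have hIoc : IntegrableOn (fun x : ℝ => (mu * exp (-(mu * x))) *
      (if t - x ≤ 0 then 1 / lam - (t - x) else exp (-(lam * (t - x))) / lam)) (Ioc 0 t) :=
    IntegrableOn.congr_fun (Continuous.integrableOn_Ioc (by fun_prop)) key1.symm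
      measurableSet_Ioc
  have hIoi : IntegrableOn (fun x : ℝ => (mu * exp (-(mu * x))) *
      (if t - x ≤ 0 then 1 / lam - (t - x) else exp (-(lam * (t - x))) / lam)) (Ioi t) :=
    IntegrableOn.congr_fun (((integrableOn_mul_exp_Ioi hmu ht.le).const_mul mu).add
      ((integrableOn_exp_Ioi hmu t).const_mul _)) key2.symm measurableSet_Ioi
  rw [← Ioc_union_Ioi_eq_Ioi ht.le,
    setIntegral_union (Ioc_disjoint_Ioi le_rfl) measurableSet_Ioi hIoc hIoi,
    setIntegral_congr_fun measurableSet_Ioc key1, setIntegral_congr_fun measurableSet_Ioi key2,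
    integral_const_mul, integral_exp_Ioc hk ht.le,
    integral_add ((integrableOn_mul_exp_Ioi hmu ht.le).const_mul mu)
      ((integrableOn_exp_Ioi hmu t).const_mul _),
    integral_const_mul, integral_const_mul, integral_mul_exp_Ioi hmu ht.le,
    integral_exp_Ioi hmu t]
  have e2 : exp ((lam - mu) * t) = exp (-(mu * t)) / exp (-(lam * t)) := by
    rw [eq_div_iff (exp_ne_zero _), ← exp_add]; congr 1; ring
  rw [e2, Phi]
  field_simp
  ring

lemma final_val {lam mu d : ℝ} (hlam : 0 < lam) (hmu : 0 < mu) (hne : lam ≠ mu) (hd : 0 ≤ d) :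
    ∫ x' in Ioi 0, (mu * exp (-(mu * x'))) *
        (if d ≤ x' then 1 / lam + 1 / mu else Phi lam mu (d - x')) =
      mu ^ 2 * (exp (-(lam * d)) - exp (-(mu * d))) / (lam * (mu - lam) ^ 2) +
        exp (-(mu * d)) * (1 / lam + 1 / mu - lam * d / (mu - lam)) := by
  have hk : lam - mu ≠ 0 := sub_ne_zero.mpr hne
  have key1 : EqOn (fun x' : ℝ => (mu * exp (-(mu * x'))) *
        (if d ≤ x' then 1 / lam + 1 / mu else Phi lam mu (d - x')))
      (fun x' : ℝ => mu * (mu / (lam * (lam - mu)) + (1 / lam + 1 / mu)) * exp (-(mu * d)) +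
        (-(mu * mu / (lam * (lam - mu))) * exp (-(lam * d))) * exp ((lam - mu) * x'))
      (Ioc 0 d) := by
    intro x' hx'
    have eE : exp ((lam - mu) * x') = exp (-(mu * x')) / exp (-(lam * x')) := by
      rw [eq_div_iff (exp_ne_zero _), ← exp_add]; congr 1; ring
    rcases eq_or_lt_of_le hx'.2 with rfl | hlt
    · simp only [if_pos le_rfl, eE]
      field_simp
      ring
    · have em : exp (-(mu * (d - x'))) = exp (-(mu * d)) / exp (-(mu * x')) := by
        rw [eq_div_iff (exp_ne_zero _), ← exp_add]; congr 1; ring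
      have el : exp (-(lam * (d - x'))) = exp (-(lam * d)) / exp (-(lam * x')) := by
        rw [eq_div_iff (exp_ne_zero _), ← exp_add]; congr 1; ring
      simp only [if_neg (not_le.mpr hlt), Phi, em, el, eE]
      field_simp
      ring
  have key2 : EqOn (fun x' : ℝ => (mu * exp (-(mu * x'))) *
        (if d ≤ x' then 1 / lam + 1 / mu else Phi lam mu (d - x')))
      (fun x' : ℝ => (mu * (1 / lam + 1 / mu)) * exp (-(mu * x'))) (Ioi d) := by
    intro x' hx'
    have hx'' : d < x' := mem_Ioi.mp hx'
    simp only [if_pos hx''.le]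
    ring
  have hIoc : IntegrableOn (fun x' : ℝ => (mu * exp (-(mu * x'))) *
      (if d ≤ x' then 1 / lam + 1 / mu else Phi lam mu (d - x'))) (Ioc 0 d) :=
    IntegrableOn.congr_fun (Continuous.integrableOn_Ioc (by fun_prop)) key1.symm
      measurableSet_Ioc
  have hIoi : IntegrableOn (fun x' : ℝ => (mu * exp (-(mu * x'))) *
      (if d ≤ x' then 1 / lam + 1 / mu else Phi lam mu (d - x'))) (Ioi d) :=
    IntegrableOn.congr_fun ((integrableOn_exp_Ioi hmu d).const_mul _) key2.symm
      measurableSet_Ioi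
  rw [← Ioc_union_Ioi_eq_Ioi hd,
    setIntegral_union (Ioc_disjoint_Ioi le_rfl) measurableSet_Ioi hIoc hIoi,
    setIntegral_congr_fun measurableSet_Ioc key1, setIntegral_congr_fun measurableSet_Ioi key2,
    integral_add ((integrableOn_const_iff).mpr (Or.inr measure_Ioc_lt_top)).integrable
      ((Continuous.integrableOn_Ioc (by fun_prop)).integrable.const_mul _),
    setIntegral_const, integral_const_mul, integral_exp_Ioc hk hd,
    integral_const_mul, integral_exp_Ioi hmu d]
  have e2 : exp ((lam - mu) * d) = exp (-(mu * d)) / exp (-(lam * d)) := by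
    rw [eq_div_iff (exp_ne_zero _), ← exp_add]; congr 1; ring
  rw [e2, measureReal_def, Real.volume_Ioc]
  rw [ENNReal.toReal_ofReal (by linarith), smul_eq_mul]
  have hml : mu - lam ≠ 0 := fun h => hne (by linarith [sub_eq_zero.mp h])
  field_simp
  ring

lemma inner_val {lam mu d : ℝ} (hlam : 0 < lam) (hmu : 0 < mu) (hne : lam ≠ mu)
    {x' : ℝ} (hx' : 0 < x') :
    ∫ p : ℝ × ℝ, min (max (x' + p.2 + p.1 - d) 0) (p.1 + p.2)
        ∂((expMeasure mu).prod (expMeasure lam)) =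
      if d ≤ x' then 1 / lam + 1 / mu else Phi lam mu (d - x') := by
  haveI : IsProbabilityMeasure (expMeasure mu) := isProbabilityMeasure_expMeasure hmu
  haveI : IsProbabilityMeasure (expMeasure lam) := isProbabilityMeasure_expMeasure hlam
  have hcont : Continuous (fun p : ℝ × ℝ => min (max (x' + p.2 + p.1 - d) 0) (p.1 + p.2)) := by
    apply Continuous.min
    · exact (by fun_prop : Continuous fun p : ℝ × ℝ => x' + p.2 + p.1 - d).max continuous_const
    · fun_prop
  have hfint : Integrable (fun p : ℝ × ℝ => min (max (x' + p.2 + p.1 - d) 0) (p.1 + p.2))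
      ((expMeasure mu).prod (expMeasure lam)) := by
    refine (integrable_abs_prod (integrable_abs_expMeasure hmu)
      (integrable_abs_expMeasure hlam)).mono' hcont.aestronglyMeasurable
      (ae_of_all _ fun p => min_max_bound _ _ _)
  rw [integral_prod _ hfint, integral_expMeasure hmu]
  by_cases hcase : d ≤ x'
  · rw [if_pos hcase]
    rw [setIntegral_congr_fun measurableSet_Ioi
      (g := fun x : ℝ => (mu * exp (-(mu * x))) * (1 / lam + x)) ?_]
    · exact mean_shift hmu (1 / lam)
    · intro x hx
      have hx0 : (0 : ℝ) < x := mem_Ioi.mp hx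
      dsimp only
      congr 1
      rw [integral_expMeasure hlam]
      rw [setIntegral_congr_fun measurableSet_Ioi
        (g := fun i : ℝ => (lam * exp (-(lam * i))) * (x + i)) ?_]
      · rw [mean_shift hlam x]; ring
      · intro i hi
        have hi0 : (0 : ℝ) < i := mem_Ioi.mp hi
        dsimp only
        congr 1
        rw [max_eq_left (by linarith), min_eq_right (by linarith)]
  · rw [if_neg hcase]
    have ht : 0 < d - x' := by have := not_le.mp hcase; linarith
    rw [setIntegral_congr_fun measurableSet_Ioi
      (g := fun x : ℝ => (mu * exp (-(mu * x))) *
        (if d - x' - x ≤ 0 then 1 / lam - (d - x' - x)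
          else exp (-(lam * (d - x' - x))) / lam)) ?_]
    · exact M_val hlam hmu hne ht
    · intro x hx
      have hx0 : (0 : ℝ) < x := mem_Ioi.mp hx
      dsimp only
      congr 1
      rw [integral_expMeasure hlam]
      rw [setIntegral_congr_fun measurableSet_Ioi
        (g := fun i : ℝ => (lam * exp (-(lam * i))) * max (i - (d - x' - x)) 0) ?_]
      · exact K_val hlam (d - x' - x)
      · intro i hi
        have hi0 : (0 : ℝ) < i := mem_Ioi.mp hi
        dsimp only
        congr 1
        have harg : x' + i + x - d = i - (d - x' - x) := by ring
        rw [harg]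
        rcases le_or_gt (i - (d - x' - x)) 0 with h | h
        · rw [max_eq_right h, min_eq_left (by linarith)]
        · rw [max_eq_left h.le, min_eq_left (by linarith)]

end Cor3Aux

open Cor3Aux

/-- Corollary 3 (M/M/1/1, case `λ ≠ μ`): with `X, X' ~ Exp(μ)` and `I ~ Exp(λ)` mutually
independent, `E[min ((X' + I + X - d)⁺, X + I)]` has the stated closed form. -/
theorem stmt10 {Ω : Type*} [MeasurableSpace Ω] (P : Measure Ω) [IsProbabilityMeasure P]
    (lam mu d : ℝ) (hlam : 0 < lam) (hmu : 0 < mu) (hne : lam ≠ mu) (hd : 0 ≤ d)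
    (X X' I : Ω → ℝ) (hX : Measurable X) (hX' : Measurable X') (hI : Measurable I)
    (hindep : iIndepFun ![X, X', I] P)
    (hXd : P.map X = expMeasure mu) (hX'd : P.map X' = expMeasure mu)
    (hId : P.map I = expMeasure lam) :
    (∫ ω, min (max (X' ω + I ω + X ω - d) 0) (X ω + I ω) ∂P) =
      mu ^ 2 * (exp (-(lam * d)) - exp (-(mu * d))) / (lam * (mu - lam) ^ 2) +
        exp (-(mu * d)) * (1 / lam + 1 / mu - lam * d / (mu - lam)) := by
  haveI : IsProbabilityMeasure (expMeasure mu) := isProbabilityMeasure_expMeasure hmu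
  haveI : IsProbabilityMeasure (expMeasure lam) := isProbabilityMeasure_expMeasure hlam
  have hmeas : ∀ i, Measurable (![X, X', I] i) := by
    intro i
    fin_cases i <;> simpa
  have h01 : IndepFun X I P := by
    simpa using hindep.indepFun (i := 0) (j := 2) (by decide)
  have hXI : P.map (fun ω => (X ω, I ω)) = (expMeasure mu).prod (expMeasure lam) := by
    rw [← hXd, ← hId]
    exact (indepFun_iff_map_prod_eq_prod_map_map hX.aemeasurable hI.aemeasurable).mp h01
  have h2 : IndepFun (fun ω => (X ω, I ω)) X' P := by
    simpa using hindep.indepFun_prodMk hmeas 0 2 1 (by decide) (by decide)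
  have hjoint : P.map (fun ω => ((X ω, I ω), X' ω))
      = ((expMeasure mu).prod (expMeasure lam)).prod (expMeasure mu) := by
    rw [← hXI, ← hX'd]
    exact (indepFun_iff_map_prod_eq_prod_map_map (hX.prodMk hI).aemeasurable
      hX'.aemeasurable).mp h2
  have hGcont : Continuous (fun q : (ℝ × ℝ) × ℝ =>
      min (max (q.2 + q.1.2 + q.1.1 - d) 0) (q.1.1 + q.1.2)) := by
    apply Continuous.min
    · exact (by fun_prop : Continuous fun q : (ℝ × ℝ) × ℝ =>
        q.2 + q.1.2 + q.1.1 - d).max continuous_const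
    · fun_prop
  have hmap : (∫ ω, min (max (X' ω + I ω + X ω - d) 0) (X ω + I ω) ∂P)
      = ∫ q : (ℝ × ℝ) × ℝ, min (max (q.2 + q.1.2 + q.1.1 - d) 0) (q.1.1 + q.1.2)
          ∂(((expMeasure mu).prod (expMeasure lam)).prod (expMeasure mu)) := by
    rw [← hjoint, integral_map ((hX.prodMk hI).prodMk hX').aemeasurable
      hGcont.aestronglyMeasurable]
  have hB : Integrable (fun q : (ℝ × ℝ) × ℝ => |q.1.1| + |q.1.2|)
      (((expMeasure mu).prod (expMeasure lam)).prod (expMeasure mu)) :=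
    integrable_comp_fst (integrable_abs_prod (integrable_abs_expMeasure hmu)
      (integrable_abs_expMeasure hlam))
  have hGint : Integrable (fun q : (ℝ × ℝ) × ℝ =>
      min (max (q.2 + q.1.2 + q.1.1 - d) 0) (q.1.1 + q.1.2))
      (((expMeasure mu).prod (expMeasure lam)).prod (expMeasure mu)) :=
    hB.mono' hGcont.aestronglyMeasurable (ae_of_all _ fun q => min_max_bound _ _ _)
  rw [hmap, integral_prod_symm _ hGint, integral_expMeasure hmu]
  rw [setIntegral_congr_fun measurableSet_Ioi (g := fun x' : ℝ => (mu * exp (-(mu * x'))) *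
    (if d ≤ x' then 1 / lam + 1 / mu else Phi lam mu (d - x'))) ?_]
  · exact final_val hlam hmu hne hd
  · intro x' hx'
    have hx'0 : (0 : ℝ) < x' := mem_Ioi.mp hx'
    dsimp only
    congr 1
    exact inner_val hlam hmu hne hx'0
end

section
/- Let μ > 0 and d ≥ 0, and let X and X' be independent random variables, each exponentially distributed with rate μ. Then μ · E[ min{(X' + X − d)^+, X} ] = (1 + μd) e^{−μd}. -/
open MeasureTheory ProbabilityTheory Real Set Filter Topology
open scoped ENNReal NNReal

namespace AoI14

lemma hasDerivAt_exp_neg_mul (r t : ℝ) :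
    HasDerivAt (fun t : ℝ => exp (-(r * t))) (exp (-(r * t)) * (-r)) t := by
  have h := (((hasDerivAt_id t).const_mul r).neg).exp
  simpa using h

lemma tendsto_exp_neg_mul (r : ℝ) (hr : 0 < r) :
    Tendsto (fun t : ℝ => exp (-(r * t))) atTop (𝓝 0) := by
  exact tendsto_exp_neg_atTop_nhds_zero.comp (tendsto_id.const_mul_atTop hr)

lemma tendsto_mul_exp_neg_mul (r : ℝ) (hr : 0 < r) :
    Tendsto (fun t : ℝ => t * exp (-(r * t))) atTop (𝓝 0) := by
  have := tendsto_rpow_mul_exp_neg_mul_atTop_nhds_zero 1 r hr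
  simpa [Real.rpow_one, neg_mul] using this

lemma hasDerivAt_F (r c : ℝ) (hr : 0 < r) (t : ℝ) :
    HasDerivAt (fun t => -(t - c) * exp (-(r * t)) - exp (-(r * t)) / r)
      ((t - c) * (r * exp (-(r * t)))) t := by
  have h1 : HasDerivAt (fun t : ℝ => -(t - c) * exp (-(r * t)))
      ((-1) * exp (-(r * t)) + (-(t - c)) * (exp (-(r * t)) * (-r))) t := by
    have ha : HasDerivAt (fun t : ℝ => -(t - c)) (-1) t := by
      exact ((hasDerivAt_id t).sub_const c).neg
    exact ha.mul (hasDerivAt_exp_neg_mul r t)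
  have h2 := (hasDerivAt_exp_neg_mul r t).div_const r
  have h := h1.sub h2
  refine h.congr_deriv ?_
  field_simp
  ring

lemma tendsto_F (r c : ℝ) (hr : 0 < r) :
    Tendsto (fun t => -(t - c) * exp (-(r * t)) - exp (-(r * t)) / r) atTop (𝓝 0) := by
  have h0 := tendsto_exp_neg_mul r hr
  have h1 := tendsto_mul_exp_neg_mul r hr
  have h2 := ((h1.neg.add (h0.const_mul c)).sub (h0.div_const r))
  have h3 : (-0 + c * 0) - 0 / r = 0 := by ring
  rw [h3] at h2
  refine (tendsto_congr fun t => ?_).mp h2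
  ring

lemma int1 (r a c : ℝ) (hr : 0 < r) (hca : c ≤ a) :
    IntegrableOn (fun x => (x - c) * (r * exp (-(r * x)))) (Ioi a) ∧
    ∫ x in Ioi a, (x - c) * (r * exp (-(r * x))) = (a - c + 1/r) * exp (-(r * a)) := by
  have hderiv : ∀ x ∈ Ici a, HasDerivAt
      (fun t => -(t - c) * exp (-(r * t)) - exp (-(r * t)) / r)
      ((x - c) * (r * exp (-(r * x)))) x := fun x _ => hasDerivAt_F r c hr x
  have hpos : ∀ x ∈ Ioi a, 0 ≤ (x - c) * (r * exp (-(r * x))) := fun x hx => by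
    have hcx : c ≤ x := hca.trans (le_of_lt hx)
    have := exp_pos (-(r * x))
    apply mul_nonneg (by linarith)
    positivity
  refine ⟨integrableOn_Ioi_deriv_of_nonneg' hderiv hpos (tendsto_F r c hr), ?_⟩
  rw [integral_Ioi_of_hasDerivAt_of_nonneg' hderiv hpos (tendsto_F r c hr)]
  field_simp
  ring

lemma intExp (r a : ℝ) (hr : 0 < r) :
    IntegrableOn (fun x => exp (-(r * x))) (Ioi a) ∧
    ∫ x in Ioi a, exp (-(r * x)) = exp (-(r * a)) / r := by
  have hderiv : ∀ x ∈ Ici a, HasDerivAt (fun t => -(exp (-(r * t)) / r))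
      (exp (-(r * x))) x := by
    intro x _
    have := ((hasDerivAt_exp_neg_mul r x).div_const r).neg
    refine this.congr_deriv ?_
    field_simp
  have hpos : ∀ x ∈ Ioi a, 0 ≤ exp (-(r * x)) := fun x _ => (exp_pos _).le
  have hlim : Tendsto (fun t => -(exp (-(r * t)) / r)) atTop (𝓝 0) := by
    have := ((tendsto_exp_neg_mul r hr).div_const r).neg
    simpa using this
  refine ⟨integrableOn_Ioi_deriv_of_nonneg' hderiv hpos hlim, ?_⟩
  rw [integral_Ioi_of_hasDerivAt_of_nonneg' hderiv hpos hlim]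
  field_simp
  ring

lemma expMeasure_eq (r : ℝ) : expMeasure r = volume.withDensity (exponentialPDF r) := rfl

lemma pdfReal_eq (r : ℝ) (x : ℝ) :
    exponentialPDFReal r x = if 0 ≤ x then r * exp (-(r * x)) else 0 := by
  rw [exponentialPDFReal, gammaPDFReal]
  simp [Real.rpow_one, Real.Gamma_one]

lemma pdf_congr_ae (r : ℝ) (f : ℝ → ℝ) :
    (fun x => f x * exponentialPDFReal r x)
      =ᵐ[volume] (Ioi 0).indicator (fun x => f x * (r * exp (-(r * x)))) := by
  have hne : ∀ᵐ x : ℝ ∂volume, x ≠ 0 := by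
    rw [ae_iff]
    have : {x : ℝ | ¬ x ≠ 0} = {0} := by ext x; simp
    rw [this]
    exact Real.volume_singleton
  filter_upwards [hne] with x hx
  rcases lt_or_gt_of_ne hx with h | h
  · rw [pdfReal_eq, if_neg (not_le.mpr h), indicator_of_notMem (by simpa using not_lt.mpr h.le)]
    ring
  · rw [pdfReal_eq, if_pos h.le, indicator_of_mem (by exact h)]

lemma integral_expMeasure (r : ℝ) (hr : 0 < r) (f : ℝ → ℝ) :
    ∫ x, f x ∂(expMeasure r) = ∫ x in Ioi 0, f x * (r * exp (-(r * x))) := by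
  have : expMeasure r
      = volume.withDensity fun x => ((exponentialPDFReal r x).toNNReal : ℝ≥0∞) := rfl
  rw [this, integral_withDensity_eq_integral_smul (measurable_exponentialPDFReal r).real_toNNReal f]
  rw [← integral_indicator measurableSet_Ioi]
  refine integral_congr_ae (.trans (Filter.EventuallyEq.of_eq ?_) (pdf_congr_ae r f))
  funext x
  rw [NNReal.smul_def, smul_eq_mul, Real.coe_toNNReal _ (exponentialPDFReal_nonneg hr x)]
  ring

lemma integrable_expMeasure (r : ℝ) (hr : 0 < r) (f : ℝ → ℝ)
    (hi : IntegrableOn (fun x => f x * (r * exp (-(r * x)))) (Ioi 0)) :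
    Integrable f (expMeasure r) := by
  rw [expMeasure_eq,
    show exponentialPDF r = fun x => ENNReal.ofReal (exponentialPDFReal r x) from rfl,
    integrable_withDensity_iff ((measurable_exponentialPDFReal r).ennreal_ofReal)
      (Eventually.of_forall fun x => ENNReal.ofReal_lt_top)]
  have h1 : Integrable ((Ioi 0).indicator (fun x => f x * (r * exp (-(r * x))))) volume :=
    (integrable_indicator_iff measurableSet_Ioi).mpr hi
  refine h1.congr (EventuallyEq.symm ?_)
  refine .trans (Filter.EventuallyEq.of_eq ?_) (pdf_congr_ae r f)
  funext x
  rw [ENNReal.toReal_ofReal (exponentialPDFReal_nonneg hr x)]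

end AoI14

namespace AoI14

lemma J_pieces (r c : ℝ) (hr : 0 < r) :
    IntegrableOn (fun x => max (x - c) 0 * (r * exp (-(r * x)))) (Ioi 0) ∧
    ∫ x in Ioi 0, max (x - c) 0 * (r * exp (-(r * x)))
      = if 0 ≤ c then exp (-(r * c)) / r else 1/r - c := by
  rcases le_or_gt 0 c with hc | hc
  · rw [if_pos hc, ← Ioc_union_Ioi_eq_Ioi hc]
    have h1 : IntegrableOn (fun x => max (x - c) 0 * (r * exp (-(r * x)))) (Ioc 0 c) := by
      refine (integrableOn_zero).congr_fun (fun x hx => ?_) measurableSet_Ioc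
      have : x - c ≤ 0 := by have := hx.2; linarith
      simp [max_eq_right this]
    have h2 : IntegrableOn (fun x => max (x - c) 0 * (r * exp (-(r * x)))) (Ioi c) := by
      refine ((int1 r c c hr le_rfl).1).congr_fun (fun x hx => ?_) measurableSet_Ioi
      have : (0:ℝ) ≤ x - c := by have := hx.out; linarith
      simp [max_eq_left this]
    refine ⟨h1.union h2, ?_⟩
    rw [setIntegral_union (Ioc_disjoint_Ioi le_rfl) measurableSet_Ioi h1 h2]
    have e1 : ∫ x in Ioc 0 c, max (x - c) 0 * (r * exp (-(r * x))) = 0 := by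
      rw [setIntegral_congr_fun measurableSet_Ioc (g := fun _ => 0) (fun x hx => by
        have : x - c ≤ 0 := by have := hx.2; linarith
        simp [max_eq_right this])]
      simp
    have e2 : ∫ x in Ioi c, max (x - c) 0 * (r * exp (-(r * x)))
        = exp (-(r * c)) / r := by
      rw [setIntegral_congr_fun measurableSet_Ioi
        (g := fun x => (x - c) * (r * exp (-(r * x)))) (fun x hx => by
          have : (0:ℝ) ≤ x - c := by have := hx.out; linarith
          simp [max_eq_left this]), (int1 r c c hr le_rfl).2]
      field_simp
      ring
    rw [e1, e2, zero_add]
  · rw [if_neg (not_le.mpr hc)]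
    have key : EqOn (fun x => (x - c) * (r * exp (-(r * x))))
        (fun x => max (x - c) 0 * (r * exp (-(r * x)))) (Ioi 0) := fun x hx => by
      have : (0:ℝ) ≤ x - c := by have := hx.out; linarith
      simp [max_eq_left this]
    refine ⟨((int1 r 0 c hr hc.le).1).congr_fun key measurableSet_Ioi, ?_⟩
    rw [← setIntegral_congr_fun measurableSet_Ioi key, (int1 r 0 c hr hc.le).2]
    simp
    ring

lemma J_int (r c : ℝ) (hr : 0 < r) :
    Integrable (fun x => max (x - c) 0) (expMeasure r) :=
  integrable_expMeasure r hr _ (J_pieces r c hr).1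

lemma J_val (r c : ℝ) (hr : 0 < r) :
    ∫ x, max (x - c) 0 ∂(expMeasure r)
      = if 0 ≤ c then exp (-(r * c)) / r else 1/r - c := by
  rw [integral_expMeasure r hr]
  exact (J_pieces r c hr).2

lemma K_val (r d : ℝ) (hr : 0 < r) (hd : 0 ≤ d) :
    ∫ x, (if 0 ≤ d - x then exp (-(r * (d - x))) / r else 1/r - (d - x)) ∂(expMeasure r)
      = d * exp (-(r * d)) + 2 * (exp (-(r * d)) / r) := by
  rw [integral_expMeasure r hr, ← Ioc_union_Ioi_eq_Ioi hd]
  set f : ℝ → ℝ := fun x =>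
    (if 0 ≤ d - x then exp (-(r * (d - x))) / r else 1/r - (d - x)) * (r * exp (-(r * x))) with hf
  have key1 : EqOn f (fun _ => exp (-(r * d))) (Ioc 0 d) := fun x hx => by
    have h1 : 0 ≤ d - x := by have := hx.2; linarith
    simp only [hf, if_pos h1]
    rw [div_mul_eq_mul_div, mul_left_comm, mul_div_cancel_left₀ _ hr.ne', ← exp_add]
    ring_nf
  have key2 : EqOn (fun x => exp (-(r * x)) + (x - d) * (r * exp (-(r * x)))) f (Ioi d) :=
    fun x hx => by
      have h1 : ¬ (0 ≤ d - x) := by have := hx.out; push_neg; linarith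
      simp only [hf, if_neg h1]
      field_simp
      ring
  have h1 : IntegrableOn f (Ioc 0 d) := by
    refine (integrableOn_const measure_Ioc_lt_top.ne).congr_fun
      (fun x hx => (key1 hx).symm) measurableSet_Ioc
  have h2 : IntegrableOn f (Ioi d) :=
    IntegrableOn.congr_fun (((intExp r d hr).1).add ((int1 r d d hr le_rfl).1))
      key2 measurableSet_Ioi
  rw [setIntegral_union (Ioc_disjoint_Ioi le_rfl) measurableSet_Ioi h1 h2]
  have e1 : ∫ x in Ioc 0 d, f x = d * exp (-(r * d)) := by
    rw [setIntegral_congr_fun measurableSet_Ioc key1, setIntegral_const]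
    simp [Real.volume_Ioc, ENNReal.toReal_ofReal hd, hd]
  have e2 : ∫ x in Ioi d, f x = 2 * (exp (-(r * d)) / r) := by
    rw [← setIntegral_congr_fun measurableSet_Ioi key2,
      integral_add ((intExp r d hr).1) ((int1 r d d hr le_rfl).1),
      (intExp r d hr).2, (int1 r d d hr le_rfl).2]
    field_simp
    ring
  rw [e1, e2]

end AoI14

namespace AoI14

lemma minmax (x y d : ℝ) (hx : 0 ≤ x) :
    min (max (y + x - d) 0) x = max (x + y - d) 0 - max (y - d) 0 := by
  rcases le_total y d with h | h
  · rw [max_eq_right (by linarith : y - d ≤ 0), sub_zero]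
    rcases le_total (y + x - d) 0 with h2 | h2
    · rw [max_eq_right h2, max_eq_right (by linarith), min_eq_left hx]
    · rw [max_eq_left h2, max_eq_left (by linarith), min_eq_left (by linarith)]
      ring
  · rw [max_eq_left (by linarith : 0 ≤ y - d),
      max_eq_left (by linarith : 0 ≤ y + x - d),
      max_eq_left (by linarith : 0 ≤ x + y - d),
      min_eq_right (by linarith)]
    ring

end AoI14

open AoI14 in
/-- Corollary 5 (zero-wait policy with exponential service): with `X, X' ~ Exp(μ)` independent,
the AoI violation probability is `μ E[min ((X' + X - d)⁺, X)] = (1 + μd) e^{-μd}`. -/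
theorem stmt14 {Ω : Type*} [MeasurableSpace Ω] (P : Measure Ω) [IsProbabilityMeasure P]
    (mu d : ℝ) (hmu : 0 < mu) (hd : 0 ≤ d)
    (X X' : Ω → ℝ) (hX : Measurable X) (hX' : Measurable X')
    (hindep : IndepFun X X' P)
    (hXd : P.map X = expMeasure mu) (hX'd : P.map X' = expMeasure mu) :
    mu * ∫ ω, min (max (X' ω + X ω - d) 0) (X ω) ∂P = (1 + mu * d) * exp (-(mu * d)) := by
  haveI : IsProbabilityMeasure (expMeasure mu) := isProbabilityMeasure_expMeasure hmu
  set ν := expMeasure mu with hν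
  have hmap : P.map (fun ω => (X ω, X' ω)) = ν.prod ν := by
    rw [(indepFun_iff_map_prod_eq_prod_map_map hX.aemeasurable hX'.aemeasurable).mp hindep,
      hXd, hX'd]
  have hgmeas : Measurable (fun p : ℝ × ℝ => min (max (p.2 + p.1 - d) 0) p.1) :=
    (((measurable_snd.add measurable_fst).sub_const d).max measurable_const).min measurable_fst
  have step1 : ∫ ω, min (max (X' ω + X ω - d) 0) (X ω) ∂P
      = ∫ p : ℝ × ℝ, min (max (p.2 + p.1 - d) 0) p.1 ∂(ν.prod ν) := by
    rw [← hmap, integral_map (hX.prodMk hX').aemeasurable hgmeas.aestronglyMeasurable]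
  have hmapsnd : (ν.prod ν).map Prod.snd = ν := by
    rw [Measure.map_snd_prod, measure_univ, one_smul]
  have hmapfst : (ν.prod ν).map Prod.fst = ν := by
    rw [Measure.map_fst_prod, measure_univ, one_smul]
  have hg2meas : Measurable (fun x : ℝ => max (x - d) 0) :=
    (measurable_id.sub_const d).max measurable_const
  have hg2int : Integrable (fun p : ℝ × ℝ => max (p.2 - d) 0) (ν.prod ν) := by
    have := (integrable_map_measure (μ := ν.prod ν) (f := Prod.snd)
      (g := fun x : ℝ => max (x - d) 0)
      hg2meas.aestronglyMeasurable measurable_snd.aemeasurable).mp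
      (by rw [hmapsnd]; exact J_int mu d hmu)
    exact this
  have hfst0int : Integrable (fun p : ℝ × ℝ => max p.1 0) (ν.prod ν) := by
    have := (integrable_map_measure (μ := ν.prod ν) (f := Prod.fst)
      (g := fun x : ℝ => max (x - 0) 0)
      ((measurable_id.sub_const 0).max measurable_const).aestronglyMeasurable
      measurable_fst.aemeasurable).mp
      (by rw [hmapfst]; exact J_int mu 0 hmu)
    simpa [Function.comp_def] using this
  have hsnd0int : Integrable (fun p : ℝ × ℝ => max p.2 0) (ν.prod ν) := by
    have := (integrable_map_measure (μ := ν.prod ν) (f := Prod.snd)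
      (g := fun x : ℝ => max (x - 0) 0)
      ((measurable_id.sub_const 0).max measurable_const).aestronglyMeasurable
      measurable_snd.aemeasurable).mp
      (by rw [hmapsnd]; exact J_int mu 0 hmu)
    simpa [Function.comp_def] using this
  have hg1int : Integrable (fun p : ℝ × ℝ => max (p.1 + p.2 - d) 0) (ν.prod ν) := by
    refine (hfst0int.add hsnd0int).mono'
      ((((measurable_fst.add measurable_snd).sub_const d).max
        measurable_const).aestronglyMeasurable) ?_
    refine Eventually.of_forall fun p => ?_
    rw [Real.norm_eq_abs, abs_of_nonneg (le_max_right _ _)]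
    simp only [Pi.add_apply]
    refine max_le ?_ (by positivity)
    have h1 := le_max_left p.1 (0:ℝ)
    have h2 := le_max_left p.2 (0:ℝ)
    linarith
  have hae : ∀ᵐ p : ℝ × ℝ ∂(ν.prod ν), 0 ≤ p.1 := by
    rw [ae_iff]
    have hs : {p : ℝ × ℝ | ¬ 0 ≤ p.1} = (Iio 0) ×ˢ (univ : Set ℝ) := by
      ext p; simp [not_le]
    have h0 : ν (Iio 0) = 0 := by
      rw [hν, expMeasure_eq, withDensity_apply _ measurableSet_Iio]
      exact lintegral_exponentialPDF_of_nonpos le_rfl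
    rw [hs, Measure.prod_prod, h0, zero_mul]
  have step2 : ∫ p : ℝ × ℝ, min (max (p.2 + p.1 - d) 0) p.1 ∂(ν.prod ν)
      = (∫ p : ℝ × ℝ, max (p.1 + p.2 - d) 0 ∂(ν.prod ν))
        - ∫ p : ℝ × ℝ, max (p.2 - d) 0 ∂(ν.prod ν) := by
    rw [← integral_sub hg1int hg2int]
    refine integral_congr_ae ?_
    filter_upwards [hae] with p hp
    exact minmax p.1 p.2 d hp
  have e1 : ∫ p : ℝ × ℝ, max (p.1 + p.2 - d) 0 ∂(ν.prod ν)
      = d * exp (-(mu * d)) + 2 * (exp (-(mu * d)) / mu) := by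
    rw [integral_prod _ hg1int]
    have inner : ∀ x : ℝ, ∫ y, max (x + y - d) 0 ∂ν
        = if 0 ≤ d - x then exp (-(mu * (d - x))) / mu else 1/mu - (d - x) := by
      intro x
      have : (fun y => max (x + y - d) 0) = fun y => max (y - (d - x)) 0 := by
        funext y; ring_nf
      rw [this, J_val mu (d - x) hmu]
    simp_rw [inner]
    exact K_val mu d hmu hd
  have e2 : ∫ p : ℝ × ℝ, max (p.2 - d) 0 ∂(ν.prod ν) = exp (-(mu * d)) / mu := by
    have e2' : ∫ y, max (y - d) 0 ∂((ν.prod ν).map Prod.snd)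
        = ∫ p : ℝ × ℝ, max (p.2 - d) 0 ∂(ν.prod ν) :=
      integral_map measurable_snd.aemeasurable hg2meas.aestronglyMeasurable
    rw [hmapsnd] at e2'
    rw [← e2', J_val mu d hmu, if_pos hd]
  rw [step1, step2, e1, e2]
  field_simp
  ring
end

section
/- Let d ≥ 0 and let X', X, I, Ž be nonnegative integrable random variables on a common probability space with I ≤ Ž almost surely. Let ν and ν̂ be positive reals with ν̂ ≥ ν and 1/ν = E[X] + E[I], and set 1/λ = E[Ž] and 1/μ = E[X]. Define Φ₁ = ν̂ · E[min{(X' + Ž + X − d)^+, X + Ž}] and P = ν · E[min{(X' + I + X − d)^+, X + I}]. Then Φ₁ ≤ (ν̂/ν) · P + ν̂ · (1/λ + 1/μ − 1/ν). -/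
open MeasureTheory

/-- Theorem 8 (worst-case performance of the upper bound `Φ₁` for GI/GI/1/1): with service
times `X`, idle times `I`, inter-arrival times `Ž` (`I ≤ Ž` a.s.), `1/ν = E[X] + E[I]`,
`1/λ = E[Ž]`, `1/μ = E[X]`, and `ν̂ ≥ ν > 0`, the bound
`Φ₁ = ν̂ E[min ((X' + Ž + X - d)⁺, X + Ž)]` satisfies
`Φ₁ ≤ (ν̂/ν) · ν E[min ((X' + I + X - d)⁺, X + I)] + ν̂ (1/λ + 1/μ - 1/ν)`. -/
theorem stmt16 {Ω : Type*} [MeasurableSpace Ω] (P : Measure Ω) [IsProbabilityMeasure P]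
    (d : ℝ) (hd : 0 ≤ d) (X' X I Z : Ω → ℝ)
    (hX'nonneg : ∀ ω, 0 ≤ X' ω) (hXnonneg : ∀ ω, 0 ≤ X ω)
    (hInonneg : ∀ ω, 0 ≤ I ω) (hZnonneg : ∀ ω, 0 ≤ Z ω)
    (hX'int : Integrable X' P) (hXint : Integrable X P)
    (hIint : Integrable I P) (hZint : Integrable Z P)
    (hIZ : ∀ᵐ ω ∂P, I ω ≤ Z ω)
    (nu nuhat lam mu : ℝ) (hnu : 0 < nu) (hnuhat : 0 < nuhat) (hge : nu ≤ nuhat)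
    (hnudef : 1 / nu = (∫ ω, X ω ∂P) + ∫ ω, I ω ∂P)
    (hlamdef : 1 / lam = ∫ ω, Z ω ∂P)
    (hmudef : 1 / mu = ∫ ω, X ω ∂P) :
    nuhat * ∫ ω, min (max (X' ω + Z ω + X ω - d) 0) (X ω + Z ω) ∂P ≤
      (nuhat / nu) * (nu * ∫ ω, min (max (X' ω + I ω + X ω - d) 0) (X ω + I ω) ∂P) +
        nuhat * (1 / lam + 1 / mu - 1 / nu) := by
  have hintZ : Integrable (fun ω => min (max (X' ω + Z ω + X ω - d) 0) (X ω + Z ω)) P := by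
    have h1 : Integrable (fun ω => max (X' ω + Z ω + X ω - d) 0) P := by
      have := (((hX'int.add hZint).add hXint).sub (integrable_const d)).sup
        (integrable_const (0 : ℝ))
      exact this
    have := h1.inf (hXint.add hZint)
    exact this
  have hintI : Integrable (fun ω => min (max (X' ω + I ω + X ω - d) 0) (X ω + I ω)) P := by
    have h1 : Integrable (fun ω => max (X' ω + I ω + X ω - d) 0) P := by
      have := (((hX'int.add hIint).add hXint).sub (integrable_const d)).sup
        (integrable_const (0 : ℝ))
      exact this
    have := h1.inf (hXint.add hIint)
    exact this
  have h2 : Integrable (fun ω => Z ω - I ω) P := hZint.sub hIint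
  have hmono : ∫ ω, min (max (X' ω + Z ω + X ω - d) 0) (X ω + Z ω) ∂P ≤
      ∫ ω, (min (max (X' ω + I ω + X ω - d) 0) (X ω + I ω) + (Z ω - I ω)) ∂P := by
    refine integral_mono_ae hintZ (hintI.add h2) ?_
    filter_upwards [hIZ] with ω hω
    simp only [min_def, max_def]
    split_ifs <;> linarith
  rw [integral_add hintI h2, integral_sub hZint hIint] at hmono
  have h1 : (nuhat / nu) * (nu * ∫ ω, min (max (X' ω + I ω + X ω - d) 0) (X ω + I ω) ∂P)
      = nuhat * ∫ ω, min (max (X' ω + I ω + X ω - d) 0) (X ω + I ω) ∂P := by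
    field_simp
  rw [h1, hlamdef, hmudef, hnudef]
  nlinarith [hnuhat.le, hmono]
end
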